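/- arXiv:2212.09343 — 2 statements merged into one kernel-verified Lean document; each statement's English description precedes it below -/
import Mathlib

section
/- Let C be an orientation of a cycle of even length with ‖C‖ edges. If γ_C = 1, then there exists a tournamenton W such that t(C,W) > 2^{-‖C‖}; and if γ_C = -1, then there exists a tournamenton W such that t(C,W) < 2^{-‖C‖}. -/
open MeasureTheory
open scoped Classical

/-- An oriented graph on a finite vertex type `V`: at most one of `(v,w)`, `(w,v)` is an edge. -/
structure OrientedGraph (V : Type) [Fintype V] where
  edges : Finset (V × V)
  irrefl : ∀ e ∈ edges, e.1 ≠ e.2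
  antisymm : ∀ v w : V, (v, w) ∈ edges → (w, v) ∉ edges

/-- The homomorphism density `t(H,U)` of an oriented graph `H` in a kernel `U`. -/
noncomputable def homDensity {V : Type} [Fintype V] (H : OrientedGraph V)
    (U : ℝ → ℝ → ℝ) : ℝ :=
  ∫ x in Set.univ.pi (fun _ : V => Set.Icc (0 : ℝ) 1),
    ∏ e ∈ H.edges, U (x e.1) (x e.2)

/-- A kernel (bounded measurable) which is antisymmetric on `[0,1]²`. -/
def IsAntisymmetricKernel (U : ℝ → ℝ → ℝ) : Prop :=
  Measurable (Function.uncurry U) ∧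
  (∃ M : ℝ, ∀ x ∈ Set.Icc (0 : ℝ) 1, ∀ y ∈ Set.Icc (0 : ℝ) 1, |U x y| ≤ M) ∧
  (∀ x ∈ Set.Icc (0 : ℝ) 1, ∀ y ∈ Set.Icc (0 : ℝ) 1, U x y = - U y x)

/-- A kernel with values in `[-1/2, 1/2]` on the unit square. -/
def BoundedByHalf (U : ℝ → ℝ → ℝ) : Prop :=
  ∀ x ∈ Set.Icc (0 : ℝ) 1, ∀ y ∈ Set.Icc (0 : ℝ) 1, |U x y| ≤ 1 / 2

/-- A tournamenton. -/
def IsTournamenton (W : ℝ → ℝ → ℝ) : Prop :=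
  Measurable (Function.uncurry W) ∧
  (∀ x ∈ Set.Icc (0 : ℝ) 1, ∀ y ∈ Set.Icc (0 : ℝ) 1, 0 ≤ W x y ∧ W x y ≤ 1) ∧
  (∀ x ∈ Set.Icc (0 : ℝ) 1, ∀ y ∈ Set.Icc (0 : ℝ) 1, W x y + W y x = 1)

/-- Lebesgue measure restricted to the unit square. -/
noncomputable def squareMeasure : Measure (ℝ × ℝ) :=
  MeasureTheory.volume.restrict ((Set.Icc (0 : ℝ) 1) ×ˢ (Set.Icc (0 : ℝ) 1))

/-- An oriented graph `H` is quasirandom-forcing if every tournamenton `W` with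
`t(H,W) = 2^{-‖H‖}` equals `1/2` almost everywhere. -/
def QuasirandomForcing {V : Type} [Fintype V] (H : OrientedGraph V) : Prop :=
  ∀ W : ℝ → ℝ → ℝ, IsTournamenton W →
    homDensity H W = (1 / 2 : ℝ) ^ H.edges.card →
    ∀ᵐ p : ℝ × ℝ ∂squareMeasure, W p.1 p.2 = 1 / 2

/-- `H` is an orientation of the path `0 - 1 - ⋯ - m` (with `m` edges). -/
def IsPathOrientation {m : ℕ} (H : OrientedGraph (Fin (m + 1))) : Prop :=
  (∀ e ∈ H.edges, e.2.val = e.1.val + 1 ∨ e.1.val = e.2.val + 1) ∧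
  (∀ i : ℕ, i < m → ∃ e ∈ H.edges,
    (e.1.val = i ∧ e.2.val = i + 1) ∨ (e.2.val = i ∧ e.1.val = i + 1))

/-- `C` is an orientation of the cycle `0 - 1 - ⋯ - (ℓ-1) - 0` of length `ℓ`. -/
def IsCycleOrientation {ℓ : ℕ} (C : OrientedGraph (Fin ℓ)) : Prop :=
  (∀ e ∈ C.edges, e.2.val = (e.1.val + 1) % ℓ ∨ e.1.val = (e.2.val + 1) % ℓ) ∧
  (∀ i : Fin ℓ, ∃ e ∈ C.edges,
    (e.1 = i ∧ e.2.val = (i.val + 1) % ℓ) ∨ (e.2 = i ∧ e.1.val = (i.val + 1) % ℓ))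

/-- `Q_{2k}`: the orientation of the path with `2k` edges in which all edges are oriented
away from the central vertex `k`; edges are `i+1 → i` for `i < k` and `i → i+1` for `k ≤ i`. -/
noncomputable def pathQ (k : ℕ) : OrientedGraph (Fin (2 * k + 1)) where
  edges := Finset.univ.filter fun e : Fin (2 * k + 1) × Fin (2 * k + 1) =>
    (e.2.val < k ∧ e.1.val = e.2.val + 1) ∨ (k ≤ e.1.val ∧ e.2.val = e.1.val + 1)
  irrefl := by
    intro e he heq
    simp only [Finset.mem_filter, Finset.mem_univ, true_and] at he
    have h : e.1.val = e.2.val := congrArg Fin.val heq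
    omega
  antisymm := by
    intro v w hvw hwv
    simp only [Finset.mem_filter, Finset.mem_univ, true_and] at hvw hwv
    omega

/-- `D_ℓ` (for even `ℓ = 2k`): the orientation of the cycle of length `ℓ` with all edges
oriented from vertex `0` towards vertex `k = ℓ/2`. -/
noncomputable def cycD (ℓ : ℕ) : OrientedGraph (Fin ℓ) where
  edges := Finset.univ.filter fun e : Fin ℓ × Fin ℓ =>
    (e.1.val < ℓ / 2 ∧ e.2.val = e.1.val + 1) ∨
    (ℓ / 2 ≤ e.2.val ∧ e.1.val = e.2.val + 1) ∨
    (2 ≤ ℓ ∧ e.1.val = 0 ∧ e.2.val = ℓ - 1)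
  irrefl := by
    intro e he heq
    simp only [Finset.mem_filter, Finset.mem_univ, true_and] at he
    have h : e.1.val = e.2.val := congrArg Fin.val heq
    have h1 := e.1.isLt
    omega
  antisymm := by
    intro v w hvw hwv
    simp only [Finset.mem_filter, Finset.mem_univ, true_and] at hvw hwv
    have h1 := v.isLt
    have h2 := w.isLt
    omega

/-- The disjoint union `Q_{2 n 0} ∪ ⋯ ∪ Q_{2 n (k-1)}`. -/
noncomputable def QUnion (k : ℕ) (n : Fin k → ℕ) :
    OrientedGraph ((i : Fin k) × Fin (2 * n i + 1)) where
  edges := Finset.univ.filter fun e =>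
    e.1.1 = e.2.1 ∧
      ((e.2.2.val < n e.1.1 ∧ e.1.2.val = e.2.2.val + 1) ∨
       (n e.1.1 ≤ e.1.2.val ∧ e.2.2.val = e.1.2.val + 1))
  irrefl := by
    intro e he heq
    simp only [Finset.mem_filter, Finset.mem_univ, true_and] at he
    have h : e.1.2.val = e.2.2.val := by rw [heq]
    omega
  antisymm := by
    intro v w hvw hwv
    simp only [Finset.mem_filter, Finset.mem_univ, true_and] at hvw hwv
    have h : n v.1 = n w.1 := by rw [hvw.1]
    omega

/-- `F` (a set of edges on the vertex set `W`) can be obtained from the oriented graph `H`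
by reversing a set `R` of edges of `H` whose cardinality satisfies `r`, and possibly adding
isolated vertices (the injection `φ` embeds the vertices of `H`). -/
def ObtainedBy {V W : Type} [Fintype V] [DecidableEq V] [Fintype W] [DecidableEq W]
    (H : OrientedGraph V) (F : Finset (W × W)) (r : ℕ → Prop) : Prop :=
  ∃ φ : V → W, Function.Injective φ ∧
    ∃ R : Finset (V × V), R ⊆ H.edges ∧ r R.card ∧
      F = (H.edges \ R).image (fun e => (φ e.1, φ e.2)) ∪
          R.image (fun e => (φ e.2, φ e.1))

/-- The coefficient `α_C(2 n 0, …, 2 n (k-1))`: the number of edge subsets `F ⊆ E(C)` such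
that the spanning subgraph `C⟨F⟩` is obtained from `Q_{2 n 0} ∪ ⋯ ∪ Q_{2 n (k-1)}` by
reversing an even number of edges and adding isolated vertices, minus the number of those
obtained by reversing an odd number of edges. -/
noncomputable def alphaCoeff {ℓ : ℕ} (C : OrientedGraph (Fin ℓ)) {k : ℕ}
    (n : Fin k → ℕ) : ℤ :=
  ((C.edges.powerset.filter fun F => ObtainedBy (QUnion k n) F Even).card : ℤ) -
  ((C.edges.powerset.filter fun F => ObtainedBy (QUnion k n) F Odd).card : ℤ)

/-- `γ_C`: equal to `1` if `C` can be obtained from `D_ℓ` by reversing an even number of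
edges, and `-1` otherwise. -/
noncomputable def gammaCoeff {ℓ : ℕ} (C : OrientedGraph (Fin ℓ)) : ℤ :=
  if ObtainedBy (cycD ℓ) C.edges Even then 1 else -1


-- ========================= auxiliary analytic machinery =========================
set_option maxHeartbeats 1000000

open Real
open scoped Real

structure Trip where
  a : ℝ
  c : ℝ
  b : ℝ

namespace Trip

noncomputable instance : Mul Trip :=
  ⟨fun s t => ⟨s.a * t.a, (s.c * t.c - s.b * t.b) / 2, (s.b * t.c + s.c * t.b) / 2⟩⟩
noncomputable instance : One Trip := ⟨⟨1, 2, 0⟩⟩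

@[simp] lemma mul_a (s t : Trip) : (s * t).a = s.a * t.a := rfl
@[simp] lemma mul_c (s t : Trip) : (s * t).c = (s.c * t.c - s.b * t.b) / 2 := rfl
@[simp] lemma mul_b (s t : Trip) : (s * t).b = (s.b * t.c + s.c * t.b) / 2 := rfl
@[simp] lemma one_a : (1 : Trip).a = 1 := rfl
@[simp] lemma one_c : (1 : Trip).c = 2 := rfl
@[simp] lemma one_b : (1 : Trip).b = 0 := rfl

lemma ext' {s t : Trip} (h1 : s.a = t.a) (h2 : s.c = t.c) (h3 : s.b = t.b) : s = t := by
  cases s; cases t; simp_all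

noncomputable instance : CommMonoid Trip where
  mul := (· * ·)
  one := 1
  mul_assoc s t u := by refine ext' ?_ ?_ ?_ <;> simp <;> ring
  one_mul t := by refine ext' ?_ ?_ ?_ <;> simp
  mul_one t := by refine ext' ?_ ?_ ?_ <;> simp
  mul_comm s t := by refine ext' ?_ ?_ ?_ <;> simp <;> ring

end Trip

noncomputable def ker (t : Trip) (x y : ℝ) : ℝ :=
  t.a + t.c * Real.cos (2*π*(y-x)) + t.b * Real.sin (2*π*(y-x))

def tr (t : Trip) : ℝ := t.a + t.c

noncomputable def trip (x : Bool) : Trip := if x then ⟨1/2, 0, 1/2⟩ else ⟨1/2, 0, -1/2⟩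

noncomputable def aHom : Trip →* ℝ where
  toFun t := t.a
  map_one' := rfl
  map_mul' _ _ := rfl

noncomputable def zHom : Trip →* ℂ where
  toFun t := ((t.c/2 : ℝ) : ℂ) + ((t.b/2 : ℝ) : ℂ) * Complex.I
  map_one' := by
    simp only [Trip.one_c, Trip.one_b]
    norm_num
  map_mul' s t := by
    simp only [Trip.mul_c, Trip.mul_b]
    apply Complex.ext <;>
      simp [Complex.add_re, Complex.add_im, Complex.mul_re, Complex.mul_im] <;> ring

lemma trip_a (x : Bool) : (trip x).a = 1/2 := by cases x <;> rfl

lemma zHom_trip (x : Bool) : zHom (trip x) = (if x then (1:ℂ) else -1) * (Complex.I/4) := by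
  cases x <;>
  · show ((_ : ℝ) : ℂ) + ((_ : ℝ) : ℂ) * Complex.I = _
    unfold trip
    norm_num
    try ring

lemma c_eq_re (t : Trip) : t.c = 2 * (zHom t).re := by
  show t.c = 2 * (((t.c/2 : ℝ) : ℂ) + ((t.b/2 : ℝ) : ℂ) * Complex.I).re
  simp [Complex.add_re, Complex.mul_re]
  ring

lemma ker_continuous (t : Trip) : Continuous (fun p : ℝ × ℝ => ker t p.1 p.2) := by
  unfold ker; fun_prop

lemma ker_self (t : Trip) (x : ℝ) : ker t x x = tr t := by
  simp [ker, tr]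

lemma integral_basis (A B C D E F : ℝ) :
    (∫ y in Set.Icc (0:ℝ) 1,
      (A + B * Real.cos (2*π*y) + C * Real.sin (2*π*y) + D * Real.cos (2*π*y)^2
        + E * (Real.sin (2*π*y) * Real.cos (2*π*y)) + F * Real.sin (2*π*y)^2))
      = A + D/2 + F/2 := by
  have hπ : (2*π) ≠ 0 := by positivity
  have hI : ∀ (g h : ℝ → ℝ), Continuous g → Continuous h →
      ∫ y in (0:ℝ)..1, (g y + h y) = (∫ y in (0:ℝ)..1, g y) + ∫ y in (0:ℝ)..1, h y :=
    fun g h hg hh => intervalIntegral.integral_add (hg.intervalIntegrable 0 1) (hh.intervalIntegrable 0 1)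
  have h1 : ∫ y in (0:ℝ)..1, Real.cos (2*π*y) = 0 := by
    have := intervalIntegral.integral_comp_mul_left (a := 0) (b := 1) Real.cos hπ
    simp only [mul_zero, mul_one] at this
    rw [this, integral_cos]
    simp [Real.sin_two_pi]
  have h2 : ∫ y in (0:ℝ)..1, Real.sin (2*π*y) = 0 := by
    have := intervalIntegral.integral_comp_mul_left (a := 0) (b := 1) Real.sin hπ
    simp only [mul_zero, mul_one] at this
    rw [this, integral_sin]
    simp [Real.cos_two_pi]
  have h3 : ∫ y in (0:ℝ)..1, Real.cos (2*π*y)^2 = 1/2 := by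
    have := intervalIntegral.integral_comp_mul_left (a := 0) (b := 1) (fun u => Real.cos u ^ 2) hπ
    simp only [mul_zero, mul_one] at this
    rw [this, integral_cos_sq]
    simp [Real.sin_two_pi, Real.cos_two_pi]
    field_simp
  have h4 : ∫ y in (0:ℝ)..1, Real.sin (2*π*y) * Real.cos (2*π*y) = 0 := by
    have := intervalIntegral.integral_comp_mul_left (a := 0) (b := 1)
      (fun u => Real.sin u * Real.cos u) hπ
    simp only [mul_zero, mul_one] at this
    rw [this, integral_sin_mul_cos₁]
    simp [Real.sin_two_pi]
  have h5 : ∫ y in (0:ℝ)..1, Real.sin (2*π*y)^2 = 1/2 := by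
    have := intervalIntegral.integral_comp_mul_left (a := 0) (b := 1) (fun u => Real.sin u ^ 2) hπ
    simp only [mul_zero, mul_one] at this
    rw [this, integral_sin_sq]
    simp [Real.sin_two_pi, Real.cos_two_pi]
    field_simp
  rw [MeasureTheory.integral_Icc_eq_integral_Ioc,
    ← intervalIntegral.integral_of_le (zero_le_one)]
  rw [hI _ _ (by fun_prop) (by fun_prop), hI _ _ (by fun_prop) (by fun_prop),
    hI _ _ (by fun_prop) (by fun_prop), hI _ _ (by fun_prop) (by fun_prop),
    hI _ _ (by fun_prop) (by fun_prop)]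
  rw [intervalIntegral.integral_const_mul, intervalIntegral.integral_const_mul,
    intervalIntegral.integral_const_mul, intervalIntegral.integral_const_mul,
    intervalIntegral.integral_const_mul, h1, h2, h3, h4, h5]
  simp
  ring

lemma ker_comp (s t : Trip) (x z : ℝ) :
    ∫ y in Set.Icc (0:ℝ) 1, ker s x y * ker t y z = ker (s * t) x z := by
  have key : ∀ y : ℝ, ker s x y * ker t y z =
      (s.a * t.a)
      + (s.a * (t.c * Real.cos (2*π*z) + t.b * Real.sin (2*π*z))
          + t.a * (s.c * Real.cos (2*π*x) - s.b * Real.sin (2*π*x))) * Real.cos (2*π*y)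
      + (s.a * (t.c * Real.sin (2*π*z) - t.b * Real.cos (2*π*z))
          + t.a * (s.c * Real.sin (2*π*x) + s.b * Real.cos (2*π*x))) * Real.sin (2*π*y)
      + ((s.c * Real.cos (2*π*x) - s.b * Real.sin (2*π*x))
          * (t.c * Real.cos (2*π*z) + t.b * Real.sin (2*π*z))) * Real.cos (2*π*y)^2
      + ((s.c * Real.cos (2*π*x) - s.b * Real.sin (2*π*x))
            * (t.c * Real.sin (2*π*z) - t.b * Real.cos (2*π*z))
          + (s.c * Real.sin (2*π*x) + s.b * Real.cos (2*π*x))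
            * (t.c * Real.cos (2*π*z) + t.b * Real.sin (2*π*z)))
          * (Real.sin (2*π*y) * Real.cos (2*π*y))
      + ((s.c * Real.sin (2*π*x) + s.b * Real.cos (2*π*x))
          * (t.c * Real.sin (2*π*z) - t.b * Real.cos (2*π*z))) * Real.sin (2*π*y)^2 := by
    intro y
    unfold ker
    rw [show 2*π*(y-x) = 2*π*y - 2*π*x by ring, show 2*π*(z-y) = 2*π*z - 2*π*y by ring,
      Real.cos_sub, Real.sin_sub, Real.cos_sub, Real.sin_sub]
    ring
  rw [show (fun y => ker s x y * ker t y z) = _ from funext key]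
  rw [integral_basis]
  unfold ker
  simp only [Trip.mul_a, Trip.mul_c, Trip.mul_b]
  rw [show 2*π*(z-x) = 2*π*z - 2*π*x by ring, Real.cos_sub, Real.sin_sub]
  ring

lemma fin_cs_add_one {m : ℕ} (i : Fin (m+1)) (h : (i:ℕ) < m) :
    (Fin.castSucc i) + 1 = Fin.castSucc (i + 1) := by
  apply Fin.ext
  have h1 : ((Fin.castSucc i + 1 : Fin (m+2))).val = ((i:ℕ) + 1) % (m+2) := by
    rw [Fin.val_add]; simp [Fin.val_one]
  have h2 : ((Fin.castSucc (i + 1) : Fin (m+2))).val = ((i:ℕ) + 1) % (m+1) := by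
    simp [Fin.val_add, Fin.val_one']
  rw [h1, h2]
  rw [Nat.mod_eq_of_lt (by omega), Nat.mod_eq_of_lt (by omega)]

lemma fin_cs_last_add_one {n : ℕ} :
    (Fin.castSucc (Fin.last n)) + 1 = Fin.last (n+1) := by
  apply Fin.ext
  have h1 : ((Fin.castSucc (Fin.last n) + 1 : Fin (n+2))).val = (n + 1) % (n+2) := by
    rw [Fin.val_add]; simp [Fin.val_one]
  rw [h1, Nat.mod_eq_of_lt (by omega)]
  simp

lemma cycle_integral (n : ℕ) (T : Fin (n+1) → Trip) :
    (∫ x in Set.univ.pi (fun _ : Fin (n+1) => Set.Icc (0:ℝ) 1),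
      ∏ i, ker (T i) (x i) (x (i+1))) = tr (∏ i, T i) := by
  induction n with
  | zero =>
    have hx : ∀ x : Fin 1 → ℝ, (∏ i, ker (T i) (x i) (x (i+1))) = tr (T 0) := by
      intro x
      rw [Fin.prod_univ_one]
      have : (0 + 1 : Fin 1) = 0 := by decide
      rw [this]
      exact ker_self _ _
    simp only [hx]
    rw [MeasureTheory.setIntegral_const]
    have hv : volume (Set.univ.pi fun _ : Fin 1 => Set.Icc (0:ℝ) 1) = 1 := by
      rw [MeasureTheory.volume_pi_pi]
      simp [Real.volume_Icc]
    rw [measureReal_def, hv, Fin.prod_univ_one]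
    simp
  | succ n IH =>
    set e := MeasurableEquiv.piFinSuccAbove (fun _ : Fin (n+2) => ℝ) (Fin.last (n+1)) with he
    set S1 : Set (Fin (n+1) → ℝ) := Set.univ.pi (fun _ => Set.Icc (0:ℝ) 1) with hS1
    have hsymm : ∀ p : ℝ × (Fin (n+1) → ℝ), e.symm p = Fin.snoc p.2 p.1 := by
      intro p
      show (Fin.insertNthEquiv (fun _ => ℝ) (Fin.last (n+1))) p = _
      rw [Fin.insertNthEquiv_last]
      rfl
    have happ : ∀ x : Fin (n+2) → ℝ, e x = (x (Fin.last (n+1)), fun j => x (Fin.castSucc j)) := by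
      intro x
      show ((Fin.insertNthEquiv (fun _ => ℝ) (Fin.last (n+1))).symm) x = _
      rw [Fin.insertNthEquiv_last]
      rfl
    -- the function on the product space
    set g : ℝ × (Fin (n+1) → ℝ) → ℝ :=
      fun p => ∏ i, ker (T i) ((Fin.snoc p.2 p.1 : Fin (n+2) → ℝ) i)
        ((Fin.snoc p.2 p.1 : Fin (n+2) → ℝ) (i+1)) with hg
    have hgcont : Continuous g := by
      have hsnoc : Continuous (fun p : ℝ × (Fin (n+1) → ℝ) => (Fin.snoc p.2 p.1 : Fin (n+2) → ℝ)) := by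
        apply continuous_pi
        intro i
        induction i using Fin.lastCases with
        | last => simpa [Fin.snoc_last] using continuous_fst
        | cast j => simpa [Fin.snoc_castSucc, Function.comp_def] using (continuous_apply j).comp continuous_snd
      have hprod : Continuous (fun y : Fin (n+2) → ℝ => ∏ i, ker (T i) (y i) (y (i+1))) := by
        apply continuous_finset_prod
        intro i _
        unfold ker
        fun_prop
      exact hprod.comp hsnoc
    have hgint : MeasureTheory.Integrable g
        ((volume.restrict (Set.Icc (0:ℝ) 1)).prod (volume.restrict S1)) := by
      rw [MeasureTheory.Measure.prod_restrict, ← MeasureTheory.Measure.volume_eq_prod]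
      exact hgcont.continuousOn.integrableOn_compact
        (isCompact_Icc.prod (isCompact_univ_pi fun _ => isCompact_Icc))
    -- step 1: transfer to the product space
    have key1 : (∫ x in Set.univ.pi (fun _ : Fin (n+2) => Set.Icc (0:ℝ) 1),
        ∏ i, ker (T i) (x i) (x (i+1)))
        = ∫ p in (Set.Icc (0:ℝ) 1) ×ˢ S1, g p := by
      have hS : (Set.univ.pi (fun _ : Fin (n+2) => Set.Icc (0:ℝ) 1)) =
          e ⁻¹' ((Set.Icc (0:ℝ) 1) ×ˢ S1) := by
        ext x
        simp only [Set.mem_preimage, happ, Set.mem_prod, Set.mem_pi, Set.mem_univ, true_implies,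
          hS1]
        constructor
        · intro h
          exact ⟨h _, fun j => h _⟩
        · rintro ⟨h1, h2⟩ i
          induction i using Fin.lastCases with
          | last => exact h1
          | cast j => exact h2 j
      rw [hS, ← (volume_preserving_piFinSuccAbove (fun _ : Fin (n+2) => ℝ)
        (Fin.last (n+1))).setIntegral_preimage_emb e.measurableEmbedding g
        ((Set.Icc (0:ℝ) 1) ×ˢ S1)]
      apply MeasureTheory.integral_congr_ae
      apply Filter.Eventually.of_forall
      intro x
      have : Fin.snoc (e x).2 (e x).1 = x := by
        have h := hsymm (e x)
        rw [← h, MeasurableEquiv.symm_apply_apply]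
      simp only [hg, ← he, this]
    -- step 2: Fubini and swap
    have key2 : (∫ p in (Set.Icc (0:ℝ) 1) ×ˢ S1, g p)
        = ∫ x in S1, ∫ t in Set.Icc (0:ℝ) 1, g (t, x) := by
      rw [MeasureTheory.Measure.volume_eq_prod, ← MeasureTheory.Measure.prod_restrict,
        MeasureTheory.integral_prod _ hgint]
      exact MeasureTheory.integral_integral_swap (by exact hgint)
    -- reduced kernel family
    set T' : Fin (n+1) → Trip := Fin.snoc (fun j : Fin n => T (Fin.castSucc (Fin.castSucc j)))
      (T (Fin.castSucc (Fin.last n)) * T (Fin.last (n+1))) with hT'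
    -- step 3: inner integral
    have key3 : ∀ x : Fin (n+1) → ℝ, (∫ t in Set.Icc (0:ℝ) 1, g (t, x))
        = ∏ i, ker (T' i) (x i) (x (i+1)) := by
      intro x
      have hpt : ∀ t : ℝ, g (t, x)
          = (∏ j : Fin n, ker (T (Fin.castSucc (Fin.castSucc j))) (x (Fin.castSucc j))
              (x (Fin.castSucc j + 1)))
            * (ker (T (Fin.castSucc (Fin.last n))) (x (Fin.last n)) t
              * ker (T (Fin.last (n+1))) t (x 0)) := by
        intro t
        simp only [hg]
        rw [Fin.prod_univ_castSucc, Fin.prod_univ_castSucc]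
        have e1 : ∀ j : Fin n,
            ker (T (Fin.castSucc (Fin.castSucc j)))
              ((Fin.snoc x t : Fin (n+2) → ℝ) (Fin.castSucc (Fin.castSucc j)))
              ((Fin.snoc x t : Fin (n+2) → ℝ) (Fin.castSucc (Fin.castSucc j) + 1))
            = ker (T (Fin.castSucc (Fin.castSucc j))) (x (Fin.castSucc j)) (x (Fin.castSucc j + 1)) := by
          intro j
          rw [fin_cs_add_one _ (by simpa using j.isLt), Fin.snoc_castSucc, Fin.snoc_castSucc]
        rw [Finset.prod_congr rfl (fun j _ => e1 j), fin_cs_last_add_one, Fin.snoc_castSucc,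
          Fin.snoc_last, Fin.last_add_one]
        have h0 : (Fin.snoc x t : Fin (n+2) → ℝ) (0 : Fin (n+2)) = x 0 := by
          rw [show (0 : Fin (n+2)) = Fin.castSucc (0 : Fin (n+1)) from rfl, Fin.snoc_castSucc]
        rw [h0]
        ring
      simp only [hpt]
      rw [integral_const_mul, ker_comp]
      rw [Fin.prod_univ_castSucc]
      simp only [hT', Fin.snoc_castSucc, Fin.snoc_last, Fin.last_add_one]
    -- step 4: apply IH
    have key4 : (∫ x in S1, ∫ t in Set.Icc (0:ℝ) 1, g (t, x)) = tr (∏ i, T' i) := by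
      rw [MeasureTheory.integral_congr_ae (Filter.Eventually.of_forall (fun x => key3 x))]
      exact IH T'
    -- step 5: products agree
    have key5 : (∏ i, T' i) = ∏ i, T i := by
      rw [Fin.prod_univ_castSucc (f := T')]
      simp only [hT', Fin.snoc_castSucc, Fin.snoc_last]
      rw [Fin.prod_univ_castSucc (f := T), Fin.prod_univ_castSucc (f := fun j => T (Fin.castSucc j))]
      rw [mul_assoc]
    rw [key1, key2, key4, key5]


-- ========================= auxiliary combinatorial machinery =========================

section Comb
open Finset

variable {L : ℕ} [NeZero L]

/-- The edge at slot `i` of a cycle orientation described by `g`. -/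
def edgeAt (g : Fin L → Bool) (i : Fin L) : Fin L × Fin L :=
  if g i then (i, i+1) else (i+1, i)

/-- number of backward edges -/
noncomputable def bcount (g : Fin L → Bool) : ℕ :=
  (Finset.univ.filter (fun i => g i = false)).card

lemma one_val (hL : 2 ≤ L) : ((1 : Fin L) : ℕ) = 1 := by
  rw [Fin.val_one']
  exact Nat.mod_eq_of_lt (by omega)

lemma add_one_val (hL : 2 ≤ L) (i : Fin L) :
    ((i+1 : Fin L) : ℕ) = ((i : ℕ) + 1) % L := by
  rw [Fin.val_add, one_val hL]

lemma add_one_val_lt (hL : 2 ≤ L) {i : Fin L} (h : (i:ℕ)+1 < L) :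
    ((i+1 : Fin L) : ℕ) = (i:ℕ)+1 := by
  rw [add_one_val hL, Nat.mod_eq_of_lt h]

lemma add_one_val_last (hL : 2 ≤ L) {i : Fin L} (h : (i:ℕ)+1 = L) :
    ((i+1 : Fin L) : ℕ) = 0 := by
  rw [add_one_val hL, h, Nat.mod_self]

lemma add_two_ne (hL : 4 ≤ L) (a : Fin L) : a + 1 + 1 ≠ a := by
  intro h
  have hv := congrArg Fin.val h
  have ha := a.isLt
  have h1 := add_one_val (by omega : 2 ≤ L) a
  have h2 := add_one_val (by omega : 2 ≤ L) (a+1)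
  rw [h2, h1] at hv
  rcases Nat.lt_or_ge ((a:ℕ)+1) L with hc | hc
  · rw [Nat.mod_eq_of_lt hc] at hv
    rcases Nat.lt_or_ge ((a:ℕ)+2) L with hc2 | hc2
    · rw [Nat.mod_eq_of_lt (by omega)] at hv
      omega
    · have hE : (a:ℕ)+1+1 = L := by omega
      rw [hE, Nat.mod_self] at hv
      omega
  · have hE : (a:ℕ)+1 = L := by omega
    rw [hE, Nat.mod_self, Nat.mod_eq_of_lt (by omega)] at hv
    omega

lemma edgeAt_inj (hL : 4 ≤ L) (g : Fin L → Bool) : Function.Injective (edgeAt g) := by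
  intro i j h
  unfold edgeAt at h
  by_cases hi : g i <;> by_cases hj : g j
  · rw [if_pos hi, if_pos hj, Prod.mk.injEq] at h
    exact h.1
  · rw [if_pos hi, if_neg hj, Prod.mk.injEq] at h
    exfalso
    have h2 := h.2
    rw [h.1] at h2
    exact add_two_ne hL j h2
  · rw [if_neg hi, if_pos hj, Prod.mk.injEq] at h
    exfalso
    have h2 := h.1
    rw [h.2] at h2
    exact add_two_ne hL j h2
  · rw [if_neg hi, if_neg hj, Prod.mk.injEq] at h
    exact add_right_cancel h.1

lemma edgeAt_congr {g g' : Fin L → Bool} (i : Fin L) (h : g i = g' i) :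
    edgeAt g i = edgeAt g' i := by
  unfold edgeAt
  rw [h]

lemma mem_image_fwd (hL : 4 ≤ L) (d : Fin L → Bool) (u : Fin L)
    (h : (u, u+1) ∈ Finset.univ.image (edgeAt d)) : d u = true := by
  obtain ⟨j, -, hj⟩ := Finset.mem_image.1 h
  unfold edgeAt at hj
  by_cases hd : d j
  · rw [if_pos hd, Prod.mk.injEq] at hj
    rwa [hj.1] at hd
  · rw [if_neg hd, Prod.mk.injEq] at hj
    exfalso
    have h2 := hj.1
    rw [hj.2] at h2
    exact add_two_ne hL u h2

lemma mem_image_bwd (hL : 4 ≤ L) (d : Fin L → Bool) (u : Fin L)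
    (h : (u+1, u) ∈ Finset.univ.image (edgeAt d)) : d u = false := by
  obtain ⟨j, -, hj⟩ := Finset.mem_image.1 h
  unfold edgeAt at hj
  by_cases hd : d j
  · rw [if_pos hd, Prod.mk.injEq] at hj
    exfalso
    have h2 := hj.2
    rw [hj.1] at h2
    exact add_two_ne hL u h2
  · rw [if_neg hd, Prod.mk.injEq] at hj
    rw [← hj.2]
    simpa using hd

lemma adj_of_mem (hL : 4 ≤ L) (d : Fin L → Bool) {a b : Fin L}
    (h : (a, b) ∈ Finset.univ.image (edgeAt d)) : b = a + 1 ∨ a = b + 1 := by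
  obtain ⟨j, -, hj⟩ := Finset.mem_image.1 h
  unfold edgeAt at hj
  by_cases hd : d j
  · rw [if_pos hd, Prod.mk.injEq] at hj
    left
    rw [← hj.1, ← hj.2]
  · rw [if_neg hd, Prod.mk.injEq] at hj
    right
    rw [← hj.1, ← hj.2]

lemma fin_induct (P : Fin L → Prop) (h0 : P 0)
    (hstep : ∀ i : Fin L, P i → P (i+1)) : ∀ i, P i := by
  intro i
  obtain ⟨v, hv⟩ := i
  induction v with
  | zero =>
    have : (⟨0, hv⟩ : Fin L) = 0 := by
      apply Fin.ext
      simp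
  
    rw [this]; exact h0
  | succ v ih =>
    have hv' : v < L := by omega
    have h2 : 2 ≤ L := by
      rcases Nat.lt_or_ge L 2 with h | h
      · interval_cases L <;> omega
      · exact h
    have he : (⟨v+1, hv⟩ : Fin L) = ⟨v, hv'⟩ + 1 := by
      apply Fin.ext
      rw [add_one_val h2]
      simp [Nat.mod_eq_of_lt hv]
    rw [he]
    exact hstep _ (ih hv')

lemma step_const (hL : 4 ≤ L) (φ : Fin L → Fin L) (hinj : Function.Injective φ)
    (hadj : ∀ i, φ (i+1) = φ i + 1 ∨ φ i = φ (i+1) + 1) :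
    (∀ i, φ (i+1) = φ i + 1) ∨ (∀ i, φ i = φ (i+1) + 1) := by
  by_cases h0 : φ (0+1) = φ 0 + 1
  · left
    apply fin_induct (fun i => φ (i+1) = φ i + 1) h0
    intro i hi
    rcases hadj (i+1) with h | h
    · exact h
    · exfalso
      have : φ (i+1+1) + 1 = φ i + 1 := by rw [← h, hi]
      have h2 : φ (i+1+1) = φ i := add_right_cancel this
      exact add_two_ne hL i (hinj h2)
  · right
    have h0' : φ 0 = φ (0+1) + 1 := by
      rcases hadj 0 with h | h
      · exact absurd h h0
      · exact h
    apply fin_induct (fun i => φ i = φ (i+1) + 1) h0'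
    intro i hi
    rcases hadj (i+1) with h | h
    · exfalso
      have h2 : φ (i+1+1) = φ i := by rw [h, ← hi]
      exact add_two_ne hL i (hinj h2)
    · exact h

lemma rot_formula (φ : Fin L → Fin L) (hrot : ∀ i, φ (i+1) = φ i + 1) :
    ∀ i, φ i = φ 0 + i := by
  apply fin_induct (fun i => φ i = φ 0 + i)
  · rw [add_zero]
  · intro i hi
    rw [hrot i, hi, add_assoc]

lemma refl_formula (φ : Fin L → Fin L) (hrefl : ∀ i, φ i = φ (i+1) + 1) :
    ∀ i, φ i = φ 0 - i := by
  apply fin_induct (fun i => φ i = φ 0 - i)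
  · rw [sub_zero]
  · intro i hi
    have : φ (i+1) = φ i - 1 := by rw [hrefl i]; abel
    rw [this, hi, sub_sub]


end Comb

section Comb2
open Finset

variable {L : ℕ} [NeZero L]

lemma cycD_edges (hL : 4 ≤ L) :
    (cycD L).edges = Finset.univ.image (edgeAt (fun i : Fin L => decide ((i:ℕ) < L/2))) := by
  ext e
  simp only [cycD, Finset.mem_filter, Finset.mem_univ, true_and, Finset.mem_image]
  constructor
  · rintro (⟨h1, h2⟩ | ⟨h1, h2⟩ | ⟨h1, h2, h3⟩)
    · refine ⟨e.1, ?_⟩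
      unfold edgeAt
      rw [if_pos (by simpa using h1)]
      have hee : e.1 + 1 = e.2 := Fin.val_injective
        (by rw [add_one_val_lt (by omega) (by have := e.2.isLt; omega)]; omega)
      rw [hee]
    · refine ⟨e.2, ?_⟩
      unfold edgeAt
      rw [if_neg (by simp only [decide_eq_true_eq]; omega)]
      have hee : e.2 + 1 = e.1 := Fin.val_injective
        (by rw [add_one_val_lt (by omega) (by have := e.1.isLt; omega)]; omega)
      rw [hee]
    · refine ⟨e.2, ?_⟩
      unfold edgeAt
      rw [if_neg (by simp only [decide_eq_true_eq]; omega)]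
      have hee : e.2 + 1 = e.1 := Fin.val_injective
        (by rw [add_one_val_last (by omega) (by omega)]; omega)
      rw [hee]
  · rintro ⟨i, rfl⟩
    unfold edgeAt
    by_cases hg : (i:ℕ) < L/2
    · rw [if_pos (by simpa using hg)]
      dsimp only
      exact Or.inl ⟨hg, add_one_val_lt (by omega) (by omega)⟩
    · rw [if_neg (by simpa using hg)]
      dsimp only
      rcases Nat.lt_or_ge ((i:ℕ)+1) L with hc | hc
      · exact Or.inr (Or.inl ⟨by omega, add_one_val_lt (by omega) hc⟩)
      · have hE : (i:ℕ)+1 = L := by have := i.isLt; omega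
        exact Or.inr (Or.inr ⟨by omega, add_one_val_last (by omega) hE, by omega⟩)

lemma cyc_edges (hL : 4 ≤ L) (C : OrientedGraph (Fin L)) (hC : IsCycleOrientation C) :
    C.edges = Finset.univ.image (edgeAt (fun i => decide ((i, i+1) ∈ C.edges))) := by
  have h2 : 2 ≤ L := by omega
  ext e
  simp only [Finset.mem_image]
  constructor
  · intro he
    rcases hC.1 e he with h | h
    · refine ⟨e.1, Finset.mem_univ _, ?_⟩
      have hee : e.1 + 1 = e.2 := Fin.val_injective (by rw [add_one_val h2]; exact h.symm)
      unfold edgeAt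
      rw [if_pos (by simp only [decide_eq_true_eq]; rwa [hee])]
      rw [hee]
    · refine ⟨e.2, Finset.mem_univ _, ?_⟩
      have hee : e.2 + 1 = e.1 := Fin.val_injective (by rw [add_one_val h2]; exact h.symm)
      have hnot : ¬((e.2, e.2+1) ∈ C.edges) := by
        intro hmem
        apply C.antisymm _ _ hmem
        rwa [hee]
      unfold edgeAt
      rw [if_neg (by simpa using hnot)]
      rw [hee]
  · rintro ⟨i, -, rfl⟩
    unfold edgeAt
    by_cases hd : (i, i+1) ∈ C.edges
    · rw [if_pos (by simpa using hd)]
      exact hd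
    · rw [if_neg (by simpa using hd)]
      obtain ⟨e, he, hcase⟩ := hC.2 i
      rcases hcase with ⟨h1, h2'⟩ | ⟨h1, h2'⟩
      · exfalso
        apply hd
        have heq : e = (i, i+1) := Prod.ext_iff.2
          ⟨h1, Fin.val_injective (by rw [add_one_val h2]; exact h2')⟩
        rwa [heq] at he
      · have heq : e = (i+1, i) := Prod.ext_iff.2
          ⟨Fin.val_injective (by rw [add_one_val h2]; exact h2'), h1⟩
        rwa [heq] at he

end Comb2


section Comb3
open Finset

variable {L : ℕ} [NeZero L]

lemma bcount_parity (g h : Fin L → Bool) :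
    ((bcount g : ZMod 2) + (bcount h : ZMod 2)) =
      (((Finset.univ.filter (fun i => g i ≠ h i)).card : ℕ) : ZMod 2) := by
  unfold bcount
  rw [Finset.card_filter, Finset.card_filter, Finset.card_filter]
  push_cast
  rw [← Finset.sum_add_distrib]
  apply Finset.sum_congr rfl
  intro i _
  cases hg : g i <;> cases hh : h i <;> simp [hg, hh] <;> decide

lemma bcount_dD (hL : 4 ≤ L) :
    bcount (fun i : Fin L => decide ((i:ℕ) < L/2)) = L - L/2 := by
  unfold bcount
  have h1 : (Finset.univ.filter
        (fun i : Fin L => (decide ((i:ℕ) < L/2)) = false)).card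
      = ((Finset.range L).filter (fun v => ¬ v < L/2)).card := by
    rw [Finset.card_filter, Finset.card_filter,
      ← Fin.sum_univ_eq_sum_range (fun v => if ¬ v < L/2 then 1 else 0) L]
    apply Finset.sum_congr rfl
    intro i _
    by_cases hv : (i:ℕ) < L/2 <;> simp [hv]
  rw [h1]
  have h2 : (Finset.range L).filter (fun v => ¬ v < L/2) = Finset.Ico (L/2) L := by
    ext v
    simp only [Finset.mem_filter, Finset.mem_range, Finset.mem_Ico]
    omega
  rw [h2, Nat.card_Ico]

lemma conclude_even (hEv : Even L) (b : ℕ)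
    (h : (b : ZMod 2) = ((L - L/2 : ℕ) : ZMod 2)) : Even (b + L/2) := by
  obtain ⟨k, hk⟩ := hEv
  have h1 : L - L/2 = L/2 := by omega
  rw [← ZMod.natCast_eq_zero_iff_even]
  push_cast
  rw [h, h1]
  push_cast
  exact CharTwo.add_self_eq_zero _

lemma key_fwd (hL : 4 ≤ L) (hEv : Even L) (d : Fin L → Bool)
    (hpar : Even (bcount d + L/2)) :
    ObtainedBy (cycD L) (Finset.univ.image (edgeAt d)) Even := by
  classical
  set dD : Fin L → Bool := fun i => decide ((i:ℕ) < L/2) with hdD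
  refine ⟨id, Function.injective_id,
    (Finset.univ.filter (fun i => d i ≠ dD i)).image (edgeAt dD), ?_, ?_, ?_⟩
  · rw [cycD_edges hL]
    exact Finset.image_subset_image (Finset.filter_subset _ _)
  · rw [Finset.card_image_of_injective _ (edgeAt_inj hL dD)]
    have hb := bcount_parity d dD
    have hdd : bcount dD = L - L/2 := bcount_dD hL
    obtain ⟨k, hk⟩ := hEv
    have h1 : L - L/2 = L/2 := by omega
    rw [← ZMod.natCast_eq_zero_iff_even] at hpar ⊢
    push_cast at hpar
    rw [← hb, hdd, h1]
    have : ((L/2 : ℕ) : ZMod 2) = ((bcount d : ℕ) : ZMod 2) := by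
      have h2 := CharTwo.add_self_eq_zero ((bcount d : ℕ) : ZMod 2)
      -- hpar : bcount d + L/2 = 0 in ZMod 2
      have := hpar
      linear_combination hpar - h2
    rw [this]
    exact CharTwo.add_self_eq_zero _
  · rw [cycD_edges hL]
    have hsd : (Finset.univ : Finset (Fin L)) \ Finset.univ.filter (fun i => d i ≠ dD i)
        = Finset.univ.filter (fun i => d i = dD i) := by
      ext i
      simp only [Finset.mem_sdiff, Finset.mem_filter, Finset.mem_univ, true_and]
      tauto
    rw [← Finset.image_sdiff _ _ (edgeAt_inj hL dD), hsd, Finset.image_image,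
      Finset.image_image]
    have h2 : Finset.image ((fun e : Fin L × Fin L => (id e.1, id e.2)) ∘ edgeAt dD)
        (Finset.univ.filter (fun i => d i = dD i))
        = Finset.image (edgeAt d) (Finset.univ.filter (fun i => d i = dD i)) := by
      apply Finset.image_congr
      intro i hi
      simp only [Finset.mem_coe, Finset.mem_filter] at hi
      simp only [Function.comp_apply]
      rw [show (id (edgeAt dD i).1, id (edgeAt dD i).2) = edgeAt dD i from rfl]
      exact edgeAt_congr i hi.2.symm
    have h3 : Finset.image ((fun e : Fin L × Fin L => (id e.2, id e.1)) ∘ edgeAt dD)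
        (Finset.univ.filter (fun i => d i ≠ dD i))
        = Finset.image (edgeAt d) (Finset.univ.filter (fun i => d i ≠ dD i)) := by
      apply Finset.image_congr
      intro i hi
      simp only [Finset.mem_coe, Finset.mem_filter] at hi
      simp only [Function.comp_apply]
      unfold edgeAt
      cases hd2 : d i <;> cases hdd2 : dD i <;> simp [hd2, hdd2] at hi ⊢
    rw [h2, h3, ← Finset.image_union]
    congr 1
    ext i
    simp only [Finset.mem_union, Finset.mem_filter, Finset.mem_univ, true_and]
    tauto

lemma key_rev (hL : 4 ≤ L) (hEv : Even L) (d : Fin L → Bool)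
    (h : ObtainedBy (cycD L) (Finset.univ.image (edgeAt d)) Even) :
    Even (bcount d + L/2) := by
  classical
  obtain ⟨φ, hinj, R, hR, hRcard, hEq⟩ := h
  set dD : Fin L → Bool := fun i : Fin L => decide ((i:ℕ) < L/2) with hdD
  rw [cycD_edges hL] at hR
  -- membership transfer for each slot
  have hmem : ∀ i : Fin L,
      (edgeAt dD i ∈ R ∧
        (φ ((edgeAt dD i).2), φ ((edgeAt dD i).1)) ∈ Finset.univ.image (edgeAt d))
      ∨ (edgeAt dD i ∉ R ∧
        (φ ((edgeAt dD i).1), φ ((edgeAt dD i).2)) ∈ Finset.univ.image (edgeAt d)) := by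
    intro i
    have hD : edgeAt dD i ∈ (cycD L).edges := by
      rw [cycD_edges hL]
      exact Finset.mem_image_of_mem _ (Finset.mem_univ i)
    by_cases hin : edgeAt dD i ∈ R
    · left
      refine ⟨hin, ?_⟩
      rw [hEq]
      apply Finset.mem_union_right
      exact Finset.mem_image_of_mem _ hin
    · right
      refine ⟨hin, ?_⟩
      rw [hEq]
      apply Finset.mem_union_left
      exact Finset.mem_image_of_mem _ (Finset.mem_sdiff.2 ⟨hD, hin⟩)
  -- adjacency of φ
  have hadj : ∀ i : Fin L, φ (i+1) = φ i + 1 ∨ φ i = φ (i+1) + 1 := by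
    intro i
    rcases hmem i with ⟨-, hm⟩ | ⟨-, hm⟩ <;> unfold edgeAt at hm <;>
      by_cases hdd : dD i
    · rw [if_pos hdd] at hm
      dsimp only at hm
      rcases adj_of_mem hL d hm with h | h
      · exact Or.inr h
      · exact Or.inl h
    · rw [if_neg hdd] at hm
      dsimp only at hm
      rcases adj_of_mem hL d hm with h | h
      · exact Or.inl h
      · exact Or.inr h
    · rw [if_pos hdd] at hm
      dsimp only at hm
      exact adj_of_mem hL d hm
    · rw [if_neg hdd] at hm
      dsimp only at hm
      rcases adj_of_mem hL d hm with h | h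
      · exact Or.inr h
      · exact Or.inl h
  -- the indicator sum for R
  have hRrepr : (Finset.univ.filter (fun i => edgeAt dD i ∈ R)).image (edgeAt dD) = R := by
    apply Finset.Subset.antisymm
    · intro r hr
      obtain ⟨i, hi, rfl⟩ := Finset.mem_image.1 hr
      exact (Finset.mem_filter.1 hi).2
    · intro r hr
      obtain ⟨i, -, rfl⟩ := Finset.mem_image.1 (hR hr)
      exact Finset.mem_image_of_mem _ (Finset.mem_filter.2 ⟨Finset.mem_univ _, hr⟩)
  have hRsum : ((R.card : ℕ) : ZMod 2)
      = ∑ i : Fin L, (if edgeAt dD i ∈ R then (1 : ZMod 2) else 0) := by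
    have h1 : R.card = (Finset.univ.filter (fun i => edgeAt dD i ∈ R)).card := by
      conv_lhs => rw [← hRrepr]
      rw [Finset.card_image_of_injective _ (edgeAt_inj hL dD)]
    rw [h1, Finset.card_filter]
    push_cast
    rfl
  have hR0 : ((R.card : ℕ) : ZMod 2) = 0 := ZMod.natCast_eq_zero_iff_even.2 hRcard
  have hbdD : bcount dD = L - L/2 := bcount_dD hL
  obtain ⟨k, hk⟩ := hEv
  have hL0 : ((L : ℕ) : ZMod 2) = 0 := by
    rw [hk]
    push_cast
    exact CharTwo.add_self_eq_zero _
  -- final goal reduction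
  apply conclude_even ⟨k, hk⟩
  rw [← hbdD]
  rcases step_const hL φ hinj hadj with hrot | hrefl
  · -- rotation case
    have hφ := rot_formula φ hrot
    have hdir : ∀ i : Fin L,
        d (φ 0 + i) = (if edgeAt dD i ∈ R then !(dD i) else dD i) := by
      intro i
      rcases hmem i with ⟨hin, hm⟩ | ⟨hin, hm⟩
      · rw [if_pos hin]
        unfold edgeAt at hm
        by_cases hdd : dD i
        · rw [if_pos hdd] at hm
          dsimp only at hm
          rw [hφ (i+1), hφ i, ← add_assoc] at hm
          rw [hdd]
          simp only [Bool.not_true]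
          exact mem_image_bwd hL d _ hm
        · rw [if_neg hdd] at hm
          dsimp only at hm
          rw [hφ (i+1), hφ i, ← add_assoc] at hm
          simp only [Bool.not_eq_true] at hdd
          rw [hdd]
          simp only [Bool.not_false]
          exact mem_image_fwd hL d _ hm
      · rw [if_neg hin]
        unfold edgeAt at hm
        by_cases hdd : dD i
        · rw [if_pos hdd] at hm
          dsimp only at hm
          rw [hφ (i+1), hφ i, ← add_assoc] at hm
          rw [hdd]
          exact mem_image_fwd hL d _ hm
        · rw [if_neg hdd] at hm
          dsimp only at hm
          rw [hφ (i+1), hφ i, ← add_assoc] at hm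
          simp only [Bool.not_eq_true] at hdd
          rw [hdd]
          exact mem_image_bwd hL d _ hm
    -- sum computation
    have hsum : ((bcount d : ℕ) : ZMod 2)
        = ((bcount dD : ℕ) : ZMod 2) + ((R.card : ℕ) : ZMod 2) := by
      unfold bcount
      rw [Finset.card_filter, Finset.card_filter]
      push_cast
      rw [hRsum]
      have hre : ∑ u : Fin L, (if d u = false then (1 : ZMod 2) else 0)
          = ∑ i : Fin L, (if d (φ 0 + i) = false then (1 : ZMod 2) else 0) := by
        exact (Fintype.sum_equiv (Equiv.addLeft (φ 0))
          (fun i => if d (φ 0 + i) = false then (1 : ZMod 2) else 0)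
          (fun u => if d u = false then (1 : ZMod 2) else 0) (fun i => rfl)).symm
      rw [hre, ← Finset.sum_add_distrib]
      apply Finset.sum_congr rfl
      intro i _
      rw [hdir i]
      by_cases hin : edgeAt dD i ∈ R <;> cases hdd : dD i <;>
        simp [hin, hdd] <;> decide
    rw [hsum, hR0, add_zero]
  · -- reflection case
    have hφ := refl_formula φ hrefl
    have hdir : ∀ i : Fin L,
        d (φ 0 - (i+1)) = !(if edgeAt dD i ∈ R then !(dD i) else dD i) := by
      intro i
      have hv1 : φ (i+1) = φ 0 - (i+1) := hφ (i+1)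
      have hv2 : φ i = (φ 0 - (i+1)) + 1 := by
        rw [hφ i]
        abel
      rcases hmem i with ⟨hin, hm⟩ | ⟨hin, hm⟩
      · rw [if_pos hin]
        unfold edgeAt at hm
        by_cases hdd : dD i
        · rw [if_pos hdd] at hm
          dsimp only at hm
          rw [hv1, hv2] at hm
          rw [hdd]
          simp only [Bool.not_true, Bool.not_false]
          exact mem_image_fwd hL d _ hm
        · rw [if_neg hdd] at hm
          dsimp only at hm
          rw [hv1, hv2] at hm
          simp only [Bool.not_eq_true] at hdd
          rw [hdd]
          simp only [Bool.not_false, Bool.not_true]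
          exact mem_image_bwd hL d _ hm
      · rw [if_neg hin]
        unfold edgeAt at hm
        by_cases hdd : dD i
        · rw [if_pos hdd] at hm
          dsimp only at hm
          rw [hv1, hv2] at hm
          rw [hdd]
          simp only [Bool.not_true]
          exact mem_image_bwd hL d _ hm
        · rw [if_neg hdd] at hm
          dsimp only at hm
          rw [hv1, hv2] at hm
          simp only [Bool.not_eq_true] at hdd
          rw [hdd]
          simp only [Bool.not_false]
          exact mem_image_fwd hL d _ hm
    have hsum : ((bcount d : ℕ) : ZMod 2)
        = ((L : ℕ) : ZMod 2) + ((bcount dD : ℕ) : ZMod 2) + ((R.card : ℕ) : ZMod 2) := by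
      unfold bcount
      rw [Finset.card_filter, Finset.card_filter]
      push_cast
      rw [hRsum]
      have hre : ∑ u : Fin L, (if d u = false then (1 : ZMod 2) else 0)
          = ∑ i : Fin L, (if d (φ 0 - (i+1)) = false then (1 : ZMod 2) else 0) := by
        exact (Fintype.sum_equiv ((Equiv.addRight (1 : Fin L)).trans (Equiv.subLeft (φ 0)))
          (fun i => if d (φ 0 - (i+1)) = false then (1 : ZMod 2) else 0)
          (fun u => if d u = false then (1 : ZMod 2) else 0) (fun i => rfl)).symm
      rw [hre]
      have hLsum : ((L : ℕ) : ZMod 2) = ∑ _i : Fin L, (1 : ZMod 2) := by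
        rw [Finset.sum_const, Finset.card_univ, Fintype.card_fin]
        simp
      rw [hLsum, ← Finset.sum_add_distrib, ← Finset.sum_add_distrib]
      apply Finset.sum_congr rfl
      intro i _
      rw [hdir i]
      by_cases hin : edgeAt dD i ∈ R <;> cases hdd : dD i <;>
        simp [hin, hdd] <;> decide
    rw [hsum, hR0, hL0, add_zero, zero_add]

end Comb3


/-- for an orientation `C` of an even cycle, if `γ_C = 1` there is a
tournamenton with density of `C` above `2^{-‖C‖}`, and if `γ_C = -1` there is one with
density below `2^{-‖C‖}`. -/
theorem exists_tournamenton_of_gamma (ℓ : ℕ) (hℓ : 4 ≤ ℓ) (hEv : Even ℓ)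
    (C : OrientedGraph (Fin ℓ)) (hC : IsCycleOrientation C) :
    (gammaCoeff C = 1 →
      ∃ W : ℝ → ℝ → ℝ, IsTournamenton W ∧
        (1 / 2 : ℝ) ^ C.edges.card < homDensity C W) ∧
    (gammaCoeff C = -1 →
      ∃ W : ℝ → ℝ → ℝ, IsTournamenton W ∧
        homDensity C W < (1 / 2 : ℝ) ^ C.edges.card) := by
  obtain ⟨k, hk⟩ := hEv
  obtain ⟨n, hn⟩ : ∃ n, ℓ = n + 1 := ⟨ℓ - 1, by omega⟩
  subst hn
  -- the tournamenton
  set W : ℝ → ℝ → ℝ := fun x y => 1/2 + Real.sin (2*π*(y - x))/2 with hW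
  have hT : IsTournamenton W := by
    refine ⟨?_, ?_, ?_⟩
    · apply Continuous.measurable
      show Continuous fun p : ℝ × ℝ => 1/2 + Real.sin (2*π*(p.2 - p.1))/2
      fun_prop
    · intro x _ y _
      simp only [hW]
      constructor
      · nlinarith [Real.neg_one_le_sin (2*π*(y-x))]
      · nlinarith [Real.sin_le_one (2*π*(y-x))]
    · intro x _ y _
      simp only [hW]
      rw [show 2*π*(x-y) = -(2*π*(y-x)) by ring, Real.sin_neg]
      ring
  -- cycle structure of C
  set d : Fin (n+1) → Bool := fun i => decide ((i, i+1) ∈ C.edges) with hd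
  have hedges : C.edges = Finset.univ.image (edgeAt d) := cyc_edges hℓ C hC
  have hcard : C.edges.card = n + 1 := by
    rw [hedges, Finset.card_image_of_injective _ (edgeAt_inj hℓ d), Finset.card_univ,
      Fintype.card_fin]
  set b := bcount d with hb
  -- density computation
  have hprod : ∀ x : Fin (n+1) → ℝ, (∏ e ∈ C.edges, W (x e.1) (x e.2))
      = ∏ i, ker (trip (d i)) (x i) (x (i+1)) := by
    intro x
    rw [hedges, Finset.prod_image (fun a _ c _ h => edgeAt_inj hℓ d h)]
    apply Finset.prod_congr rfl
    intro i _
    unfold edgeAt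
    cases hdi : d i
    · rw [if_neg (by simp)]
      dsimp only
      show W (x (i+1)) (x i) = ker (trip false) (x i) (x (i+1))
      simp only [hW]
      unfold ker trip
      rw [if_neg (by simp)]
      rw [show 2*π*(x i - x (i+1)) = -(2*π*(x (i+1) - x i)) by ring, Real.sin_neg]
      show (1:ℝ)/2 + _ = 1/2 + (0:ℝ) * _ + (-1/2 : ℝ) * _
      ring
    · rw [if_pos rfl]
      dsimp only
      show W (x i) (x (i+1)) = ker (trip true) (x i) (x (i+1))
      simp only [hW]
      unfold ker trip
      rw [if_pos rfl]
      show (1:ℝ)/2 + _ = 1/2 + (0:ℝ) * _ + (1/2 : ℝ) * _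
      ring
  have hdens0 : homDensity C W = tr (∏ i, trip (d i)) := by
    unfold homDensity
    rw [MeasureTheory.integral_congr_ae (Filter.Eventually.of_forall hprod)]
    exact cycle_integral n (fun i => trip (d i))
  -- trace computation
  have ha : (∏ i, trip (d i)).a = (1/2 : ℝ)^(n+1) := by
    have h1 : aHom (∏ i, trip (d i)) = ∏ i, aHom (trip (d i)) :=
      map_prod aHom _ _
    have h2 : ∀ i : Fin (n+1), aHom (trip (d i)) = 1/2 := fun i => trip_a (d i)
    calc (∏ i, trip (d i)).a = aHom (∏ i, trip (d i)) := rfl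
      _ = ∏ i, aHom (trip (d i)) := h1
      _ = ∏ _i : Fin (n+1), (1/2 : ℝ) := Finset.prod_congr rfl (fun i _ => h2 i)
      _ = (1/2 : ℝ)^(n+1) := by
          rw [Finset.prod_const, Finset.card_univ, Fintype.card_fin]
  have hzprod : zHom (∏ i, trip (d i)) = (-1 : ℂ)^b * (Complex.I/4)^(n+1) := by
    rw [map_prod zHom]
    calc (∏ i, zHom (trip (d i)))
        = ∏ i, ((if d i then (1:ℂ) else -1) * (Complex.I/4)) :=
          Finset.prod_congr rfl (fun i _ => zHom_trip (d i))
      _ = (∏ i, (if d i then (1:ℂ) else -1)) * (Complex.I/4)^(n+1) := by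
          rw [Finset.prod_mul_distrib, Finset.prod_const, Finset.card_univ, Fintype.card_fin]
      _ = (-1 : ℂ)^b * (Complex.I/4)^(n+1) := by
          congr 1
          rw [Finset.prod_ite (fun _ => (1:ℂ)) (fun _ => (-1:ℂ)), Finset.prod_const,
            Finset.prod_const, one_pow, one_mul]
          congr 1
          rw [hb]
          unfold bcount
          congr 1
          apply Finset.filter_congr
          intro i _
          simp
  have hIpow : (Complex.I/4)^(n+1) = (-1/16 : ℂ)^k := by
    have hkk : n + 1 = 2 * k := by omega
    rw [hkk, pow_mul]
    norm_num [div_pow, Complex.I_sq]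
  have hc : (∏ i, trip (d i)).c = 2 * ((-1 : ℝ)^b * (-1/16 : ℝ)^k) := by
    rw [c_eq_re, hzprod, hIpow]
    congr 1
    have : ((-1 : ℂ)^b * (-1/16 : ℂ)^k) = ((((-1 : ℝ)^b * (-1/16 : ℝ)^k : ℝ)) : ℂ) := by
      push_cast
      norm_num
    rw [this, Complex.ofReal_re]
  have hdens : homDensity C W = (1/2 : ℝ)^(n+1) + 2 * ((-1 : ℝ)^(b + k) * (1/16 : ℝ)^k) := by
    rw [hdens0]
    unfold tr
    rw [ha, hc]
    have : (-1/16 : ℝ)^k = (-1 : ℝ)^k * (1/16 : ℝ)^k := by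
      rw [show (-1/16 : ℝ) = -(1/16) by norm_num, neg_pow]
    rw [this, pow_add]
    ring
  have hk2 : (n+1)/2 = k := by omega
  have hpow_pos : (0:ℝ) < (1/16 : ℝ)^k := by positivity
  constructor
  · intro hg
    have hOb : ObtainedBy (cycD (n+1)) C.edges Even := by
      by_contra hnot
      rw [gammaCoeff, if_neg hnot] at hg
      norm_num at hg
    have hEvb : Even (b + (n+1)/2) := key_rev hℓ ⟨k, hk⟩ d (hedges ▸ hOb)
    rw [hk2] at hEvb
    refine ⟨W, hT, ?_⟩
    rw [hcard, hdens, Even.neg_one_pow hEvb]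
    linarith
  · intro hg
    have hnot : ¬ ObtainedBy (cycD (n+1)) C.edges Even := by
      intro hOb
      rw [gammaCoeff, if_pos hOb] at hg
      norm_num at hg
    have hOdd : Odd (b + k) := by
      rw [← Nat.not_even_iff_odd]
      intro hEvb
      apply hnot
      rw [hedges]
      exact key_fwd hℓ ⟨k, hk⟩ d (by rwa [hk2])
    refine ⟨W, hT, ?_⟩
    rw [hcard, hdens, Odd.neg_one_pow hOdd]
    linarith
end

section
/- Let C be an orientation of a cycle of even length. If α_C(2) and γ_C are both non-zero and have different signs, then C is not quasirandom-forcing. -/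
open MeasureTheory
open scoped Classical

noncomputable section QRaux

namespace QRaux

def Mm : Fin 4 → Fin 4 → ℝ := fun i j =>
  if (j.val + 4 - i.val) % 4 = 1 then -1 else if (j.val + 4 - i.val) % 4 = 3 then 1 else 0

def Xm : Fin 4 → Fin 4 → ℝ := fun i j =>
  if i.val ≤ 1 ∧ 2 ≤ j.val then 1 else if j.val ≤ 1 ∧ 2 ≤ i.val then -1 else 0

lemma fin4v3 : ((3 : Fin 4) : ℕ) = 3 := rfl

lemma Mm_antisymm : ∀ i j, Mm j i = - Mm i j := by
  intro i j; fin_cases i <;> fin_cases j <;> norm_num [Mm, fin4v3]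

lemma Mm_abs_le : ∀ i j, |Mm i j| ≤ 1 := by
  intro i j; fin_cases i <;> fin_cases j <;> norm_num [Mm, fin4v3]

lemma Mm_row : ∀ i, ∑ j, Mm i j = 0 := by
  intro i; fin_cases i <;> norm_num [Mm, Fin.sum_univ_four, fin4v3]

lemma Mm_col : ∀ j, ∑ i, Mm i j = 0 := by
  intro j; fin_cases j <;> norm_num [Mm, Fin.sum_univ_four, fin4v3]

lemma Mm_01 : Mm 0 1 = -1 := by norm_num [Mm]

lemma Xm_antisymm : ∀ i j, Xm j i = - Xm i j := by
  intro i j; fin_cases i <;> fin_cases j <;> norm_num [Xm, fin4v3]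

lemma Xm_abs_le : ∀ i j, |Xm i j| ≤ 1 := by
  intro i j; fin_cases i <;> fin_cases j <;> norm_num [Xm, fin4v3]

lemma Xm_02 : Xm 0 2 = 1 := by norm_num [Xm]

lemma Xm_total : ∑ a, ∑ b, Xm a b = 0 := by
  norm_num [Xm, Fin.sum_univ_four, fin4v3]

lemma Xm_rowsq : ∑ c, (∑ a, Xm c a) * (∑ b, Xm c b) = 16 := by
  norm_num [Xm, Fin.sum_univ_four, fin4v3]

def Mmat : Matrix (Fin 4) (Fin 4) ℝ := Matrix.of Mm

def M2m : Fin 4 → Fin 4 → ℝ := fun i j =>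
  if (j.val + 4 - i.val) % 4 = 0 then -2 else if (j.val + 4 - i.val) % 4 = 2 then 2 else 0

lemma hM2 : Mmat * Mmat = Matrix.of M2m := by
  ext i j
  fin_cases i <;> fin_cases j <;>
    norm_num [Mmat, Matrix.mul_apply, Fin.sum_univ_four, Mm, M2m, fin4v3]

lemma hM3 : Mmat ^ 3 = (-4 : ℝ) • Mmat := by
  have h : Mmat ^ 3 = (Mmat * Mmat) * Mmat := by rw [pow_succ, pow_two]
  rw [h, hM2]
  ext i j
  fin_cases i <;> fin_cases j <;>
    norm_num [Mmat, Matrix.mul_apply, Fin.sum_univ_four, Mm, M2m, fin4v3, Matrix.smul_apply]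

lemma hM4 : Mmat ^ 4 = (-4 : ℝ) • (Mmat ^ 2) := by
  have h : Mmat ^ 4 = Mmat ^ 3 * Mmat := by rw [← pow_succ]
  rw [h, hM3, smul_mul_assoc, ← pow_two]

lemma Mpow_odd : ∀ j : ℕ, Mmat ^ (2*j+1) = ((-4 : ℝ) ^ j) • Mmat := by
  intro j; induction j with
  | zero => simp
  | succ k ih =>
    have h1 : 2*(k+1)+1 = (2*k+1) + 2 := by ring
    rw [h1, pow_add, ih, smul_mul_assoc]
    have h2 : Mmat * Mmat ^ 2 = (-4 : ℝ) • Mmat := by rw [← pow_succ', hM3]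
    rw [h2, smul_smul]
    rw [show ((-4:ℝ)^k * -4) = (-4:ℝ)^(k+1) by rw [pow_succ]]

lemma Mpow_even : ∀ j : ℕ, Mmat ^ (2*j+2) = ((-4 : ℝ) ^ j) • (Mmat ^ 2) := by
  intro j; induction j with
  | zero => simp
  | succ k ih =>
    have h1 : 2*(k+1)+2 = (2*k+2) + 2 := by ring
    rw [h1, pow_add, ih, smul_mul_assoc, ← pow_add]
    have h2 : Mmat ^ (2+2) = (-4 : ℝ) • Mmat ^ 2 := hM4
    rw [h2, smul_smul]
    rw [show ((-4:ℝ)^k * -4) = (-4:ℝ)^(k+1) by rw [pow_succ]]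

lemma Mpow_ne_zero : ∀ h : ℕ, 1 ≤ h → ∃ a b, (Mmat ^ h) a b ≠ 0 := by
  intro h hh
  rcases Nat.even_or_odd h with he | ho
  · obtain ⟨r, hr⟩ := he
    have hr1 : 1 ≤ r := by omega
    have : h = 2*(r-1)+2 := by omega
    rw [this, Mpow_even]
    refine ⟨0, 0, ?_⟩
    rw [Matrix.smul_apply]
    have h00 : (Mmat ^ 2) 0 0 = -2 := by rw [pow_two, hM2]; norm_num [M2m]
    rw [h00, smul_eq_mul]
    have h4 : ((-4 : ℝ) ^ (r-1)) ≠ 0 := by positivity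
    exact mul_ne_zero h4 (by norm_num)
  · obtain ⟨r, hr⟩ := ho
    rw [hr, Mpow_odd]
    refine ⟨0, 1, ?_⟩
    rw [Matrix.smul_apply]
    have : Mmat 0 1 = Mm 0 1 := rfl
    rw [this, Mm_01, smul_eq_mul]
    have h4 : ((-4 : ℝ) ^ r) ≠ 0 := by positivity
    exact mul_ne_zero h4 (by norm_num)

end QRaux


noncomputable section QRauxB
namespace QRaux

abbrev Mat4 := Matrix (Fin 4) (Fin 4) ℝ

def chain (a : Fin 4) : List Mat4 → Fin 4 → ℝ
  | [], b => if a = b then 1 else 0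
  | A :: L, b => ∑ c, A a c * chain c L b

lemma chain_eq (L : List Mat4) : ∀ a b, chain a L b = L.prod a b := by
  induction L with
  | nil => intro a b; simp [chain, Matrix.one_apply]
  | cons A L ih =>
    intro a b
    simp only [chain, List.prod_cons, Matrix.mul_apply, ih]

def prevV {q : ℕ} (a : Fin 4) (σ : Fin q → Fin 4) (i : Fin q) : Fin 4 :=
  if h : (i : ℕ) = 0 then a else σ ⟨(i : ℕ) - 1, lt_of_le_of_lt (Nat.sub_le _ _) i.2⟩

def lastV {q : ℕ} (a : Fin 4) (σ : Fin q → Fin 4) : Fin 4 :=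
  if h : q = 0 then a else σ ⟨q - 1, Nat.sub_lt (Nat.pos_of_ne_zero h) one_pos⟩

lemma prevV_zero {q : ℕ} (a : Fin 4) (σ : Fin (q+1) → Fin 4) :
    prevV a σ 0 = a := by
  unfold prevV
  rw [dif_pos (by simp)]

lemma prevV_cons_succ {m : ℕ} (a c : Fin 4) (σ' : Fin m → Fin 4) (i : Fin m) :
    prevV a (Fin.cons c σ') i.succ = prevV c σ' i := by
  unfold prevV
  have hs : (i.succ : ℕ) = (i : ℕ) + 1 := rfl
  rw [dif_neg (by omega)]
  by_cases h0 : (i : ℕ) = 0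
  · have he : (⟨(i.succ : ℕ) - 1, lt_of_le_of_lt (Nat.sub_le _ _) i.succ.2⟩ : Fin (m+1)) = 0 := by
      apply Fin.ext; simp [hs, h0]
    rw [he, Fin.cons_zero, dif_pos h0]
  · have he : (⟨(i.succ : ℕ) - 1, lt_of_le_of_lt (Nat.sub_le _ _) i.succ.2⟩ : Fin (m+1))
        = Fin.succ ⟨(i : ℕ) - 1, lt_of_le_of_lt (Nat.sub_le _ _) i.2⟩ := by
      apply Fin.ext; simp [hs]; omega
    rw [he, Fin.cons_succ, dif_neg h0]

lemma lastV_cons {m : ℕ} (a c : Fin 4) (σ' : Fin m → Fin 4) :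
    lastV a (Fin.cons c σ') = lastV c σ' := by
  unfold lastV
  rw [dif_neg (Nat.succ_ne_zero m)]
  by_cases hm : m = 0
  · subst hm
    have he : (⟨0 + 1 - 1, Nat.sub_lt (Nat.pos_of_ne_zero (Nat.succ_ne_zero 0)) one_pos⟩ : Fin 1) = 0 := by
      apply Fin.ext; simp
    rw [he, Fin.cons_zero, dif_pos rfl]
  · have he : (⟨m + 1 - 1, Nat.sub_lt (Nat.pos_of_ne_zero (Nat.succ_ne_zero m)) one_pos⟩ : Fin (m+1))
        = Fin.succ ⟨m - 1, Nat.sub_lt (Nat.pos_of_ne_zero hm) one_pos⟩ := by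
      apply Fin.ext; simp; omega
    rw [he, Fin.cons_succ, dif_neg hm]

lemma walk_sum : ∀ (q : ℕ) (G : Fin q → Mat4) (a b : Fin 4),
    (∑ σ : Fin q → Fin 4,
      (∏ i, (G i) (prevV a σ i) (σ i)) * (if lastV a σ = b then 1 else 0))
      = chain a (List.ofFn G) b := by
  intro q
  induction q with
  | zero =>
    intro G a b
    rw [Fintype.sum_unique]
    simp [lastV, chain, List.ofFn_zero]
  | succ m ih =>
    intro G a b
    rw [List.ofFn_succ]
    rw [show chain a (G 0 :: List.ofFn fun i => G i.succ) b
        = ∑ c, (G 0) a c * chain c (List.ofFn fun i => G i.succ) b from rfl]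
    rw [← Equiv.sum_comp (Fin.consEquiv (fun _ : Fin (m+1) => Fin 4))]
    rw [Fintype.sum_prod_type]
    refine Finset.sum_congr rfl (fun c _ => ?_)
    rw [← ih (fun i => G i.succ) c b, Finset.mul_sum]
    refine Finset.sum_congr rfl (fun σ' _ => ?_)
    have hsymm : (Fin.consEquiv (fun _ : Fin (m+1) => Fin 4)) (c, σ') = Fin.cons c σ' := rfl
    rw [hsymm]
    rw [Fin.prod_univ_succ]
    rw [prevV_zero, Fin.cons_zero, lastV_cons]
    have hprod : ∀ i : Fin m,
        (G i.succ) (prevV a (Fin.cons c σ') i.succ) ((Fin.cons c σ' : Fin (m+1) → Fin 4) i.succ)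
        = (G i.succ) (prevV c σ' i) (σ' i) := by
      intro i; rw [prevV_cons_succ, Fin.cons_succ]
    rw [Finset.prod_congr rfl (fun i _ => hprod i)]
    ring

lemma cyclicSum (n : ℕ) [NeZero n] (G : Fin n → Mat4) :
    ∑ τ : Fin n → Fin 4, ∏ i, (G i) (τ i) (τ (i + 1))
      = Matrix.trace ((List.ofFn G).prod) := by
  rcases n with _ | m
  · exact absurd rfl (NeZero.ne 0)
  have htr : Matrix.trace ((List.ofFn G).prod) = ∑ a, chain a (List.ofFn G) a := by
    simp only [Matrix.trace, Matrix.diag]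
    exact Finset.sum_congr rfl (fun a _ => (chain_eq _ a a).symm)
  rw [htr]
  let E : (Fin (m+1) → Fin 4) ≃ (Fin (m+1) → Fin 4) :=
    (Equiv.subRight (1 : Fin (m+1))).arrowCongr (Equiv.refl (Fin 4))
  have hE : ∀ (τ : Fin (m+1) → Fin 4) (i : Fin (m+1)), E τ i = τ (i + 1) := by
    intro τ i
    show τ ((Equiv.subRight (1 : Fin (m+1))).symm i) = τ (i + 1)
    first
    | rfl
    | (congr 1; simp [Equiv.subRight])
  set lastI : Fin (m+1) := ⟨m, Nat.lt_succ_self m⟩ with hlastI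
  have hlast1 : lastI + 1 = 0 := by
    apply Fin.ext
    rw [Fin.add_def]
    simp [hlastI, Fin.val_one']
  have hprev : ∀ (τ : Fin (m+1) → Fin 4) (i : Fin (m+1)),
      prevV ((E τ) lastI) (E τ) i = τ i := by
    intro τ i
    unfold prevV
    by_cases h0 : (i : ℕ) = 0
    · rw [dif_pos h0, hE, hlast1]
      congr 1
      exact Fin.ext (by simp [h0])
    · rw [dif_neg h0, hE]
      congr 1
      have hi1 : 1 ≤ (i : ℕ) := by omega
      have him : (i : ℕ) < m + 1 := i.2
      apply Fin.ext
      rw [Fin.add_def]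
      simp only [Fin.val_one']
      have h1m : 1 % (m + 1) = 1 := Nat.mod_eq_of_lt (by omega)
      rw [h1m]
      show ((i : ℕ) - 1 + 1) % (m+1) = (i : ℕ)
      rw [show (i : ℕ) - 1 + 1 = (i : ℕ) by omega]
      exact Nat.mod_eq_of_lt him
  have key : ∀ τ : Fin (m+1) → Fin 4,
      ∏ i, (G i) (τ i) (τ (i + 1))
      = ∏ i, (G i) (prevV ((E τ) lastI) (E τ) i) ((E τ) i) := by
    intro τ
    refine Finset.prod_congr rfl (fun i _ => ?_)
    rw [hprev, hE]
  calc ∑ τ : Fin (m+1) → Fin 4, ∏ i, (G i) (τ i) (τ (i + 1))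
      = ∑ τ : Fin (m+1) → Fin 4,
          (∏ i, (G i) (prevV ((E τ) lastI) (E τ) i) ((E τ) i)) := by
        exact Finset.sum_congr rfl (fun τ _ => key τ)
    _ = ∑ σ : Fin (m+1) → Fin 4,
          (∏ i, (G i) (prevV (σ lastI) σ i) (σ i)) := by
        exact Equiv.sum_comp E (fun σ => ∏ i, (G i) (prevV (σ lastI) σ i) (σ i))
    _ = ∑ σ : Fin (m+1) → Fin 4, ∑ a,
          (∏ i, (G i) (prevV a σ i) (σ i)) * (if lastV a σ = a then 1 else 0) := by
        refine Finset.sum_congr rfl (fun σ _ => ?_)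
        have hl : ∀ a : Fin 4, lastV a σ = σ lastI := by
          intro a; unfold lastV; rw [dif_neg (Nat.succ_ne_zero m)]
          congr 1
        have hsw : ∀ a : Fin 4,
            (∏ i, (G i) (prevV a σ i) (σ i)) * (if lastV a σ = a then 1 else 0)
            = if σ lastI = a then (∏ i, (G i) (prevV a σ i) (σ i)) else 0 := by
          intro a; rw [hl a]
          by_cases h : σ lastI = a
          · rw [if_pos h, if_pos h, mul_one]
          · rw [if_neg h, if_neg h, mul_zero]
        rw [Finset.sum_congr rfl (fun a _ => hsw a)]
        rw [Finset.sum_ite_eq]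
        simp
    _ = ∑ a, chain a (List.ofFn G) a := by
        rw [Finset.sum_comm]
        exact Finset.sum_congr rfl (fun a _ => walk_sum (m+1) G a a)

end QRaux


noncomputable section QRauxC
namespace QRaux

variable {W' : Type} [Fintype W'] [DecidableEq W']

/-- split a function space at a point -/
def splitEquiv (v : W') : (W' → Fin 4) ≃ Fin 4 × ({w : W' // w ≠ v} → Fin 4) where
  toFun τ := (τ v, fun w => τ w.1)
  invFun p w := if h : w = v then p.1 else p.2 ⟨w, h⟩
  left_inv τ := by
    funext w
    by_cases h : w = v
    · subst h; simp
    · simp [h]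
  right_inv p := by
    refine Prod.ext ?_ ?_
    · simp
    · funext w
      rcases w with ⟨w, hw⟩
      simp [hw]

lemma splitEquiv_symm_update (v : W') (a b : Fin 4) (ρ : {w : W' // w ≠ v} → Fin 4) :
    (splitEquiv v).symm (a, ρ) = Function.update ((splitEquiv v).symm (b, ρ)) v a := by
  funext w
  by_cases h : w = v
  · subst h; simp [splitEquiv]
  · simp [splitEquiv, h, Function.update_of_ne h]

lemma sum_update_eq_zero (v : W') (H : (W' → Fin 4) → ℝ)
    (h : ∀ τ, ∑ a, H (Function.update τ v a) = 0) :
    ∑ τ, H τ = 0 := by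
  rw [← Equiv.sum_comp (splitEquiv v).symm]
  rw [Fintype.sum_prod_type, Finset.sum_comm]
  refine Finset.sum_eq_zero (fun ρ _ => ?_)
  have : ∀ a : Fin 4, H ((splitEquiv v).symm (a, ρ))
      = H (Function.update ((splitEquiv v).symm (0, ρ)) v a) := by
    intro a; rw [splitEquiv_symm_update v a 0 ρ]
  rw [Finset.sum_congr rfl (fun a _ => this a)]
  exact h _

lemma sum_update_quadruple (w : W') (H : (W' → Fin 4) → ℝ) :
    ∑ τ, ∑ b, H (Function.update τ w b) = 4 * ∑ τ, H τ := by
  rw [← Equiv.sum_comp (splitEquiv w).symm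
    (fun τ => ∑ b, H (Function.update τ w b))]
  rw [Fintype.sum_prod_type]
  have hin : ∀ (c : Fin 4) (ρ : {x : W' // x ≠ w} → Fin 4) (b : Fin 4),
      H (Function.update ((splitEquiv w).symm (c, ρ)) w b) = H ((splitEquiv w).symm (b, ρ)) := by
    intro c ρ b
    rw [splitEquiv_symm_update w b c ρ]
  have : ∀ c : Fin 4, ∑ ρ, ∑ b, H (Function.update ((splitEquiv w).symm (c, ρ)) w b)
      = ∑ τ, H τ := by
    intro c
    rw [Finset.sum_congr rfl (fun ρ _ => Finset.sum_congr rfl (fun b _ => hin c ρ b))]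
    rw [Finset.sum_comm]
    rw [← Fintype.sum_prod_type (fun p : Fin 4 × ({x : W' // x ≠ w} → Fin 4) => H ((splitEquiv w).symm p))]
    exact Equiv.sum_comp (splitEquiv w).symm H
  rw [Finset.sum_congr rfl (fun c (_ : c ∈ Finset.univ) => this c)]
  rw [Finset.sum_const]
  simp [Finset.card_univ]

lemma sum_update2_eq_zero (v w : W') (hvw : v ≠ w) (H : (W' → Fin 4) → ℝ)
    (h : ∀ τ, ∑ a, ∑ b, H (Function.update (Function.update τ v a) w b) = 0) :
    ∑ τ, H τ = 0 := by
  have h4 : (4 : ℝ) * ∑ τ, H τ = 0 := by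
    rw [← sum_update_quadruple w H]
    apply sum_update_eq_zero v (fun τ => ∑ b, H (Function.update τ w b))
    intro τ
    exact h τ
  have := mul_eq_zero.1 h4
  rcases this with h' | h'
  · norm_num at h'
  · exact h'

/-- sums over functions factor through restriction along an injection -/
def restrictEquiv {V : Type} [Fintype V] [DecidableEq V] (φ : V → W') (hφ : Function.Injective φ) :
    (W' → Fin 4) ≃ (V → Fin 4) × ({w : W' // w ∉ Set.range φ} → Fin 4) where
  toFun τ := (fun v => τ (φ v), fun w => τ w.1)
  invFun p w := if h : w ∈ Set.range φ then p.1 h.choose else p.2 ⟨w, h⟩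
  left_inv τ := by
    funext w
    by_cases h : w ∈ Set.range φ
    · beta_reduce
      rw [dif_pos h]
      have := h.choose_spec
      simp only [this]
    · beta_reduce
      rw [dif_neg h]
  right_inv p := by
    refine Prod.ext ?_ ?_
    · funext v
      have hmem : φ v ∈ Set.range φ := ⟨v, rfl⟩
      show (if h : φ v ∈ Set.range φ then p.1 h.choose else _) = p.1 v
      rw [dif_pos hmem]
      exact congrArg p.1 (hφ hmem.choose_spec)
    · funext w
      rcases w with ⟨w, hw⟩
      show (if h : w ∈ Set.range φ then p.1 h.choose else p.2 ⟨w, h⟩) = p.2 ⟨w, hw⟩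
      rw [dif_neg hw]

lemma restrict_sum {V : Type} [Fintype V] [DecidableEq V] (φ : V → W')
    (hφ : Function.Injective φ) (g : (V → Fin 4) → ℝ) :
    ∑ τ : W' → Fin 4, g (fun v => τ (φ v))
      = (4 : ℝ) ^ (Fintype.card W' - Fintype.card V) * ∑ σ : V → Fin 4, g σ := by
  rw [← Equiv.sum_comp (restrictEquiv φ hφ).symm (fun τ => g (fun v => τ (φ v)))]
  rw [Fintype.sum_prod_type]
  have hres : ∀ (σ : V → Fin 4) (ρ : {w : W' // w ∉ Set.range φ} → Fin 4),
      (fun v => (restrictEquiv φ hφ).symm (σ, ρ) (φ v)) = σ := by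
    intro σ ρ
    funext v
    have hmem : φ v ∈ Set.range φ := ⟨v, rfl⟩
    show (if h : φ v ∈ Set.range φ then σ h.choose else _) = σ v
    rw [dif_pos hmem]
    congr 1
    exact hφ hmem.choose_spec
  have : ∀ σ : V → Fin 4, ∑ ρ : {w : W' // w ∉ Set.range φ} → Fin 4,
      g (fun v => (restrictEquiv φ hφ).symm (σ, ρ) (φ v)) = (4:ℝ)^(Fintype.card W' - Fintype.card V) * g σ := by
    intro σ
    rw [Finset.sum_congr rfl (fun ρ _ => by rw [hres σ ρ])]
    rw [Finset.sum_const, Finset.card_univ]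
    have hcard : Fintype.card ({w : W' // w ∉ Set.range φ} → Fin 4)
        = 4 ^ (Fintype.card W' - Fintype.card V) := by
      rw [Fintype.card_fun]
      have h1 : Fintype.card {w : W' // w ∈ Set.range φ} = Fintype.card V := by
        exact (Fintype.card_congr (Equiv.ofInjective φ hφ)).symm
      have h2 : Fintype.card {w : W' // w ∉ Set.range φ}
          = Fintype.card W' - Fintype.card V := by
        rw [Fintype.card_subtype_compl, h1]
      rw [h2, Fintype.card_fin]
    rw [hcard, nsmul_eq_mul]
    push_cast
    ring
  rw [Finset.sum_congr rfl (fun σ (_ : σ ∈ Finset.univ) => this σ)]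
  rw [← Finset.mul_sum]

end QRaux


-- Section D : cycle structure infrastructure
namespace QRaux

section Cyc

variable {ℓ : ℕ} [NeZero ℓ]

def nxt (i : Fin ℓ) : Fin ℓ := i + 1

lemma val_nxt (h4 : 4 ≤ ℓ) (i : Fin ℓ) : ((nxt i : Fin ℓ) : ℕ) = ((i : ℕ) + 1) % ℓ := by
  show ((i + 1 : Fin ℓ) : ℕ) = _
  rw [Fin.add_def, Fin.val_one']
  rw [Nat.mod_eq_of_lt (show 1 < ℓ by omega)]

lemma modsucc (h4 : 4 ≤ ℓ) (a : ℕ) (ha : a < ℓ) :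
    (a + 1) % ℓ = if a + 1 = ℓ then 0 else a + 1 := by
  by_cases h : a + 1 = ℓ
  · rw [if_pos h, h, Nat.mod_self]
  · rw [if_neg h, Nat.mod_eq_of_lt (by omega)]

lemma val_nxt' (h4 : 4 ≤ ℓ) (i : Fin ℓ) :
    ((nxt i : Fin ℓ) : ℕ) = if (i : ℕ) + 1 = ℓ then 0 else (i : ℕ) + 1 := by
  rw [val_nxt h4, modsucc h4 _ i.2]

lemma nxt_ne (h4 : 4 ≤ ℓ) (i : Fin ℓ) : nxt i ≠ i := by
  intro hcon
  have h1 := val_nxt' h4 i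
  rw [hcon] at h1
  have := i.2
  split_ifs at h1 <;> omega

lemma nxt_nxt_ne (h4 : 4 ≤ ℓ) (i : Fin ℓ) : nxt (nxt i) ≠ i := by
  intro hcon
  have h1 := val_nxt' h4 i
  have h2 := val_nxt' h4 (nxt i)
  rw [hcon] at h2
  have hi := i.2
  have hni := (nxt i).2
  split_ifs at h1 h2 <;> omega

lemma nxt_injective (h4 : 4 ≤ ℓ) : Function.Injective (nxt (ℓ := ℓ)) := by
  intro i j hij
  have h1 := val_nxt' h4 i
  have h2 := val_nxt' h4 j
  rw [hij] at h1
  have hi := i.2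
  have hj := j.2
  apply Fin.ext
  split_ifs at h1 h2 <;> omega

lemma cyc_closure (h4 : 4 ≤ ℓ) (S : Finset (Fin ℓ)) (hne : S.Nonempty)
    (hcl : ∀ i ∈ S, nxt i ∈ S) : S = Finset.univ := by
  open Fin.NatCast in
  obtain ⟨i0, hi0⟩ := hne
  have hn : ∀ n : ℕ, i0 + (n : Fin ℓ) ∈ S := by
    intro n
    induction n with
    | zero => simpa using hi0
    | succ k ih =>
      have : i0 + ((k+1 : ℕ) : Fin ℓ) = nxt (i0 + (k : Fin ℓ)) := by
        show i0 + ((k+1 : ℕ) : Fin ℓ) = (i0 + (k : Fin ℓ)) + 1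
        push_cast
        rw [add_assoc]
      rw [this]
      exact hcl _ ih
  apply Finset.eq_univ_iff_forall.2
  intro j
  have h1 : i0 + (((j - i0 : Fin ℓ) : ℕ) : Fin ℓ) = j := by
    rw [Fin.cast_val_eq_self]
    rw [add_comm, sub_add_cancel]
  rw [← h1]
  exact hn _

variable {C : OrientedGraph (Fin ℓ)}

/-- the edge of `C` at cyclic position `i` -/
def pe (hC : IsCycleOrientation C) (i : Fin ℓ) : Fin ℓ × Fin ℓ :=
  (hC.2 i).choose

lemma pe_mem (hC : IsCycleOrientation C) (i : Fin ℓ) : pe hC i ∈ C.edges :=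
  (hC.2 i).choose_spec.1

lemma pe_form (hC : IsCycleOrientation C) (h4 : 4 ≤ ℓ) (i : Fin ℓ) :
    pe hC i = (i, nxt i) ∨ pe hC i = (nxt i, i) := by
  rcases (hC.2 i).choose_spec.2 with ⟨h1, h2⟩ | ⟨h1, h2⟩
  · left
    have : (pe hC i).2 = nxt i := Fin.ext (by unfold pe; rw [h2, val_nxt h4])
    exact Prod.ext h1 this
  · right
    have : (pe hC i).1 = nxt i := Fin.ext (by unfold pe; rw [h2, val_nxt h4])
    exact Prod.ext this h1

lemma edge_unique (h4 : 4 ≤ ℓ) (e f : Fin ℓ × Fin ℓ) (he : e ∈ C.edges) (hf : f ∈ C.edges)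
    (i : Fin ℓ) (h1 : e = (i, nxt i) ∨ e = (nxt i, i)) (h2 : f = (i, nxt i) ∨ f = (nxt i, i)) :
    e = f := by
  rcases h1 with h1 | h1 <;> rcases h2 with h2 | h2 <;> try (rw [h1, h2])
  · exfalso
    rw [h1] at he; rw [h2] at hf
    exact C.antisymm i (nxt i) he hf
  · exfalso
    rw [h1] at he; rw [h2] at hf
    exact C.antisymm (nxt i) i he hf

lemma pe_spec (hC : IsCycleOrientation C) (h4 : 4 ≤ ℓ) (e : Fin ℓ × Fin ℓ)
    (he : e ∈ C.edges) (i : Fin ℓ) (hform : e = (i, nxt i) ∨ e = (nxt i, i)) :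
    pe hC i = e :=
  edge_unique h4 _ _ (pe_mem hC i) he i (pe_form hC h4 i) hform

lemma edge_form (hC : IsCycleOrientation C) (h4 : 4 ≤ ℓ) (e : Fin ℓ × Fin ℓ)
    (he : e ∈ C.edges) : e = (e.1, nxt e.1) ∨ e = (nxt e.2, e.2) := by
  rcases hC.1 e he with h1 | h1
  · left
    have : e.2 = nxt e.1 := Fin.ext (by rw [h1, val_nxt h4])
    exact Prod.ext rfl this
  · right
    have : e.1 = nxt e.2 := Fin.ext (by rw [h1, val_nxt h4])
    exact Prod.ext this rfl

lemma pe_surj (hC : IsCycleOrientation C) (h4 : 4 ≤ ℓ) (e : Fin ℓ × Fin ℓ)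
    (he : e ∈ C.edges) : ∃ i, pe hC i = e := by
  rcases edge_form hC h4 e he with h1 | h1
  · exact ⟨e.1, pe_spec hC h4 e he e.1 (Or.inl h1)⟩
  · exact ⟨e.2, pe_spec hC h4 e he e.2 (Or.inr h1)⟩

lemma pe_inj (hC : IsCycleOrientation C) (h4 : 4 ≤ ℓ) :
    Function.Injective (pe hC) := by
  intro i j hij
  rcases pe_form hC h4 i with h1 | h1 <;> rcases pe_form hC h4 j with h2 | h2 <;>
    rw [h1, h2] at hij <;>
    rw [Prod.mk.injEq] at hij
  · exact hij.1
  · exfalso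
    have : nxt (nxt j) = j := by rw [← hij.1, hij.2]
    exact nxt_nxt_ne h4 j this
  · exfalso
    have : nxt (nxt i) = i := by rw [hij.1, hij.2]
    exact nxt_nxt_ne h4 i this
  · exact nxt_injective h4 hij.1

lemma edges_eq_image (hC : IsCycleOrientation C) (h4 : 4 ≤ ℓ) :
    C.edges = Finset.univ.image (pe hC) := by
  apply Finset.ext
  intro e
  constructor
  · intro he
    obtain ⟨i, hi⟩ := pe_surj hC h4 e he
    exact Finset.mem_image.2 ⟨i, Finset.mem_univ i, hi⟩
  · intro he
    obtain ⟨i, _, hi⟩ := Finset.mem_image.1 he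
    rw [← hi]
    exact pe_mem hC i

lemma card_edges (hC : IsCycleOrientation C) (h4 : 4 ≤ ℓ) : C.edges.card = ℓ := by
  rw [edges_eq_image hC h4, Finset.card_image_of_injective _ (pe_inj hC h4)]
  simp

/-- leaf existence for proper nonempty subsets of the cycle's edges -/
lemma exists_leaf (hC : IsCycleOrientation C) (h4 : 4 ≤ ℓ) (F : Finset (Fin ℓ × Fin ℓ))
    (hFsub : F ⊆ C.edges) (hFne : F.Nonempty) (hFproper : F ≠ C.edges) :
    ∃ v : Fin ℓ, ∃ e₀ ∈ F, ((e₀.1 = v ∧ e₀.2 ≠ v) ∨ (e₀.2 = v ∧ e₀.1 ≠ v)) ∧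
      (∀ e ∈ F, e ≠ e₀ → e.1 ≠ v ∧ e.2 ≠ v) := by
  classical
  set S : Finset (Fin ℓ) := Finset.univ.filter (fun i => pe hC i ∈ F) with hS
  have hSne : S.Nonempty := by
    obtain ⟨f, hf⟩ := hFne
    obtain ⟨i, hi⟩ := pe_surj hC h4 f (hFsub hf)
    exact ⟨i, by simp [hS, hi, hf]⟩
  have hSnotcl : ¬(∀ i ∈ S, nxt i ∈ S) := by
    intro hcl
    have hSuniv := cyc_closure h4 S hSne hcl
    apply hFproper
    apply Finset.Subset.antisymm hFsub
    intro e he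
    obtain ⟨i, hi⟩ := pe_surj hC h4 e he
    have : i ∈ S := hSuniv ▸ Finset.mem_univ i
    rw [hS] at this
    simp only [Finset.mem_filter] at this
    rw [← hi]
    exact this.2
  push_neg at hSnotcl
  obtain ⟨i, hiS, hniS⟩ := hSnotcl
  have hpeF : pe hC i ∈ F := by
    rw [hS] at hiS; simpa using hiS
  have hpenF : pe hC (nxt i) ∉ F := by
    intro hcon
    apply hniS
    rw [hS]; simpa using hcon
  refine ⟨nxt i, pe hC i, hpeF, ?_, ?_⟩
  · rcases pe_form hC h4 i with h1 | h1
    · right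
      rw [h1]
      exact ⟨rfl, fun hcon => nxt_ne h4 i hcon.symm⟩
    · left
      rw [h1]
      exact ⟨rfl, fun hcon => nxt_ne h4 i hcon.symm⟩
  · intro e heF hene
    have heC := hFsub heF
    constructor
    · intro hcon
      rcases edge_form hC h4 e heC with hf | hf
      · rw [hcon] at hf
        have hpe : pe hC (nxt i) = e := pe_spec hC h4 e heC (nxt i) (Or.inl hf)
        exact hpenF (hpe ▸ heF)
      · have hx : e.1 = nxt e.2 := congrArg Prod.fst hf
        have he2 : nxt e.2 = nxt i := by rw [← hx, hcon]
        have he2' : e.2 = i := nxt_injective h4 he2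
        rw [he2'] at hf
        exact hene (pe_spec hC h4 e heC i (Or.inr hf)).symm
    · intro hcon
      rcases edge_form hC h4 e heC with hf | hf
      · have hx : e.2 = nxt e.1 := congrArg Prod.snd hf
        have he1 : nxt e.1 = nxt i := by rw [← hx, hcon]
        have he1' : e.1 = i := nxt_injective h4 he1
        rw [he1'] at hf
        exact hene (pe_spec hC h4 e heC i (Or.inl hf)).symm
      · rw [hcon] at hf
        have hpe : pe hC (nxt i) = e := pe_spec hC h4 e heC (nxt i) (Or.inr hf)
        exact hpenF (hpe ▸ heF)

end Cyc

end QRaux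


-- Section E : reindexing along obtainments; the D-cycle sum
namespace QRaux

lemma obt_images_disjoint {V W' : Type} [Fintype V] [DecidableEq V] [Fintype W'] [DecidableEq W']
    (H : OrientedGraph V) (φ : V → W') (hφ : Function.Injective φ)
    (R : Finset (V × V)) (hR : R ⊆ H.edges) :
    Disjoint ((H.edges \ R).image (fun e => (φ e.1, φ e.2)))
      (R.image (fun e => (φ e.2, φ e.1))) := by
  rw [Finset.disjoint_left]
  intro x hx1 hx2
  obtain ⟨a, ha, hax⟩ := Finset.mem_image.1 hx1
  obtain ⟨b, hb, hbx⟩ := Finset.mem_image.1 hx2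
  have ha' : a ∈ H.edges := (Finset.mem_sdiff.1 ha).1
  have hb' : b ∈ H.edges := hR hb
  rw [← hbx] at hax
  rw [Prod.mk.injEq] at hax
  have h1 : a.1 = b.2 := hφ hax.1
  have h2 : a.2 = b.1 := hφ hax.2
  have hbe : (b.1, b.2) ∈ H.edges := by rwa [Prod.mk.eta]
  have : (b.2, b.1) ∉ H.edges := H.antisymm b.1 b.2 hbe
  apply this
  have : a = (b.2, b.1) := Prod.ext h1 h2
  rwa [this] at ha'

lemma obt_card {V W' : Type} [Fintype V] [DecidableEq V] [Fintype W'] [DecidableEq W']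
    (H : OrientedGraph V) (F : Finset (W' × W')) (φ : V → W') (hφ : Function.Injective φ)
    (R : Finset (V × V)) (hR : R ⊆ H.edges)
    (hF : F = (H.edges \ R).image (fun e => (φ e.1, φ e.2)) ∪ R.image (fun e => (φ e.2, φ e.1))) :
    F.card = H.edges.card := by
  have hinj1 : Set.InjOn (fun e : V × V => (φ e.1, φ e.2)) (H.edges \ R : Finset (V × V)) := by
    intro a _ b _ hab
    rw [Prod.mk.injEq] at hab
    exact Prod.ext (hφ hab.1) (hφ hab.2)
  have hinj2 : Set.InjOn (fun e : V × V => (φ e.2, φ e.1)) (R : Finset (V × V)) := by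
    intro a _ b _ hab
    rw [Prod.mk.injEq] at hab
    exact Prod.ext (hφ hab.2) (hφ hab.1)
  rw [hF, Finset.card_union_of_disjoint (obt_images_disjoint H φ hφ R hR),
    Finset.card_image_of_injOn hinj1, Finset.card_image_of_injOn hinj2,
    Finset.card_sdiff_of_subset hR]
  have := Finset.card_le_card hR
  omega

lemma obt_sum {V W' : Type} [Fintype V] [DecidableEq V] [Fintype W'] [DecidableEq W']
    (H : OrientedGraph V) (F : Finset (W' × W')) (φ : V → W') (hφ : Function.Injective φ)
    (R : Finset (V × V)) (hR : R ⊆ H.edges)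
    (hF : F = (H.edges \ R).image (fun e => (φ e.1, φ e.2)) ∪ R.image (fun e => (φ e.2, φ e.1)))
    (A : Fin 4 → Fin 4 → ℝ) (hA : ∀ i j, A j i = - A i j) :
    ∑ τ : W' → Fin 4, ∏ e ∈ F, A (τ e.1) (τ e.2)
      = (-1 : ℝ) ^ R.card * (4 : ℝ) ^ (Fintype.card W' - Fintype.card V) *
        ∑ σ : V → Fin 4, ∏ e ∈ H.edges, A (σ e.1) (σ e.2) := by
  have hinj1 : Set.InjOn (fun e : V × V => (φ e.1, φ e.2)) (H.edges \ R : Finset (V × V)) := by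
    intro a _ b _ hab
    rw [Prod.mk.injEq] at hab
    exact Prod.ext (hφ hab.1) (hφ hab.2)
  have hinj2 : Set.InjOn (fun e : V × V => (φ e.2, φ e.1)) (R : Finset (V × V)) := by
    intro a _ b _ hab
    rw [Prod.mk.injEq] at hab
    exact Prod.ext (hφ hab.2) (hφ hab.1)
  have hper : ∀ τ : W' → Fin 4, ∏ e ∈ F, A (τ e.1) (τ e.2)
      = (-1 : ℝ) ^ R.card * ∏ e ∈ H.edges, A (τ (φ e.1)) (τ (φ e.2)) := by
    intro τ
    rw [hF, Finset.prod_union (obt_images_disjoint H φ hφ R hR),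
      Finset.prod_image hinj1, Finset.prod_image hinj2]
    have : ∀ e ∈ R, A (τ (φ e.2)) (τ (φ e.1)) = (-1) * A (τ (φ e.1)) (τ (φ e.2)) := by
      intro e _
      rw [hA]
      ring
    rw [Finset.prod_congr rfl this, Finset.prod_mul_distrib, Finset.prod_const]
    rw [show ∀ x y z : ℝ, x * (y * z) = y * (x * z) from fun x y z => by ring]
    congr 1
    exact Finset.prod_sdiff hR
  rw [Finset.sum_congr rfl (fun τ _ => hper τ), ← Finset.mul_sum]
  have : ∑ τ : W' → Fin 4, ∏ e ∈ H.edges, A (τ (φ e.1)) (τ (φ e.2))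
      = (4:ℝ) ^ (Fintype.card W' - Fintype.card V) *
        ∑ σ : V → Fin 4, ∏ e ∈ H.edges, A (σ e.1) (σ e.2) := by
    exact restrict_sum φ hφ (fun σ => ∏ e ∈ H.edges, A (σ e.1) (σ e.2))
  rw [this]
  ring

section DCyc

variable {ℓ : ℕ} [NeZero ℓ]

def PD (i : Fin ℓ) : Fin ℓ × Fin ℓ := if (i : ℕ) < ℓ/2 then (i, nxt i) else (nxt i, i)

lemma cycD_edges (h4 : 4 ≤ ℓ) : (cycD ℓ).edges = Finset.univ.image (PD (ℓ := ℓ)) := by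
  apply Finset.ext
  intro e
  simp only [cycD, Finset.mem_filter, Finset.mem_univ, true_and, Finset.mem_image]
  constructor
  · rintro (⟨h1, h2⟩ | ⟨h1, h2⟩ | ⟨h0, h1, h2⟩)
    · refine ⟨e.1, ?_⟩
      rw [PD, if_pos h1]
      have : e.2 = nxt e.1 := by
        apply Fin.ext
        rw [val_nxt' h4, h2]
        have := Nat.div_le_self ℓ 2
        rw [if_neg (by omega)]
      rw [← this]
    · refine ⟨e.2, ?_⟩
      rw [PD, if_neg (by omega)]
      have he1 := e.1.2
      have : e.1 = nxt e.2 := by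
        apply Fin.ext
        rw [val_nxt' h4, if_neg (by omega)]
        omega
      rw [← this]
    · refine ⟨e.2, ?_⟩
      have h2' : ℓ/2 ≤ (e.2 : ℕ) := by omega
      rw [PD, if_neg (by omega)]
      have : e.1 = nxt e.2 := by
        apply Fin.ext
        rw [val_nxt' h4, h2, h1]
        rw [if_pos (by omega)]
      rw [← this]
  · rintro ⟨i, hi⟩
    subst hi
    by_cases hlt : (i : ℕ) < ℓ/2
    · rw [PD, if_pos hlt]
      left
      dsimp only
      refine ⟨hlt, ?_⟩
      rw [val_nxt' h4]
      have := Nat.div_le_self ℓ 2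
      rw [if_neg (by omega)]
    · rw [PD, if_neg hlt]
      by_cases hend : (i : ℕ) + 1 = ℓ
      · right; right
        dsimp only
        refine ⟨by omega, ?_, by omega⟩
        rw [val_nxt' h4, if_pos hend]
      · right; left
        dsimp only
        have hiv := i.2
        refine ⟨by omega, ?_⟩
        rw [val_nxt' h4, if_neg hend]

lemma PD_inj (h4 : 4 ≤ ℓ) : Function.Injective (PD (ℓ := ℓ)) := by
  intro i j hij
  unfold PD at hij
  split_ifs at hij <;> rw [Prod.mk.injEq] at hij
  · exact hij.1
  · exfalso
    have : nxt (nxt j) = j := by rw [← hij.1, hij.2]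
    exact nxt_nxt_ne h4 j this
  · exfalso
    have : nxt (nxt i) = i := by rw [hij.1, hij.2]
    exact nxt_nxt_ne h4 i this
  · exact hij.2

def Gd (i : Fin ℓ) : Mat4 := if (i : ℕ) < ℓ/2 then Mmat else Mmat.transpose

lemma Dprod (h4 : 4 ≤ ℓ) (τ : Fin ℓ → Fin 4) :
    ∏ e ∈ (cycD ℓ).edges, Mm (τ e.1) (τ e.2) = ∏ i, (Gd i) (τ i) (τ (i + 1)) := by
  rw [cycD_edges h4, Finset.prod_image (fun a _ b _ hab => PD_inj h4 hab)]
  refine Finset.prod_congr rfl (fun i _ => ?_)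
  unfold PD Gd
  by_cases hlt : (i : ℕ) < ℓ/2
  · rw [if_pos hlt, if_pos hlt]
    rfl
  · rw [if_neg hlt, if_neg hlt, Matrix.transpose_apply]
    rfl

lemma ZD_pos (h4 : 4 ≤ ℓ) (hEv : Even ℓ) :
    0 < ∑ τ : Fin ℓ → Fin 4, ∏ e ∈ (cycD ℓ).edges, Mm (τ e.1) (τ e.2) := by
  have h2 : ℓ - ℓ/2 = ℓ/2 := by
    obtain ⟨r, hr⟩ := hEv
    omega
  have hlist : List.ofFn (Gd (ℓ := ℓ))
      = List.replicate (ℓ/2) Mmat ++ List.replicate (ℓ - ℓ/2) Mmat.transpose := by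
    apply List.ext_getElem
    · simp; omega
    · intro n h1 h2'
      rw [List.getElem_ofFn]
      rw [List.getElem_append]
      simp only [List.length_replicate]
      by_cases hn : n < ℓ/2
      · rw [dif_pos hn, List.getElem_replicate]
        unfold Gd
        rw [if_pos (by simpa using hn)]
      · rw [dif_neg hn, List.getElem_replicate]
        unfold Gd
        rw [if_neg (by simpa using hn)]
  have hsum : ∑ τ : Fin ℓ → Fin 4, ∏ e ∈ (cycD ℓ).edges, Mm (τ e.1) (τ e.2)
      = Matrix.trace ((List.ofFn (Gd (ℓ := ℓ))).prod) := by
    rw [Finset.sum_congr rfl (fun τ _ => Dprod h4 τ)]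
    exact cyclicSum ℓ Gd
  rw [hsum, hlist, List.prod_append, List.prod_replicate, List.prod_replicate, h2]
  have htp : (Mmat.transpose) ^ (ℓ/2) = (Mmat ^ (ℓ/2)).transpose := (Matrix.transpose_pow Mmat (ℓ/2)).symm
  rw [htp]
  have htr : Matrix.trace (Mmat ^ (ℓ/2) * (Mmat ^ (ℓ/2)).transpose)
      = ∑ a, ∑ b, ((Mmat ^ (ℓ/2)) a b)^2 := by
    simp only [Matrix.trace, Matrix.diag, Matrix.mul_apply, Matrix.transpose_apply]
    refine Finset.sum_congr rfl (fun a _ => Finset.sum_congr rfl (fun b _ => ?_))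
    ring
  rw [htr]
  obtain ⟨a, b, hab⟩ := Mpow_ne_zero (ℓ/2) (by omega)
  have hnonneg : ∀ a' ∈ Finset.univ, (0:ℝ) ≤ ∑ b', ((Mmat ^ (ℓ/2)) a' b')^2 := by
    intro a' _
    exact Finset.sum_nonneg (fun b' _ => sq_nonneg _)
  refine Finset.sum_pos' hnonneg ⟨a, Finset.mem_univ a, ?_⟩
  refine Finset.sum_pos' (fun b' _ => sq_nonneg _) ⟨b, Finset.mem_univ b, ?_⟩
  exact lt_of_le_of_ne (sq_nonneg _) (Ne.symm (pow_ne_zero 2 hab))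

end DCyc

end QRaux


-- Section F : gamma coefficient and the cycle sum for C
namespace QRaux

section GammaSec

variable {ℓ : ℕ} [NeZero ℓ] {C : OrientedGraph (Fin ℓ)}

lemma pe_or_swap (hC : IsCycleOrientation C) (h4 : 4 ≤ ℓ) (i : Fin ℓ) :
    pe hC i = PD i ∨ pe hC i = ((PD i).2, (PD i).1) := by
  rcases pe_form hC h4 i with h | h <;> unfold PD <;> by_cases hlt : (i : ℕ) < ℓ/2
  · left; rw [if_pos hlt]; exact h
  · right; rw [if_neg hlt]; exact h
  · right; rw [if_pos hlt]; exact h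
  · left; rw [if_neg hlt]; exact h

lemma PD_mem_D (h4 : 4 ≤ ℓ) (i : Fin ℓ) : PD i ∈ (cycD ℓ).edges := by
  rw [cycD_edges h4]
  exact Finset.mem_image.2 ⟨i, Finset.mem_univ i, rfl⟩

lemma id_obt (hC : IsCycleOrientation C) (h4 : 4 ≤ ℓ) :
    C.edges = ((cycD ℓ).edges \ ((cycD ℓ).edges.filter (fun e => e ∉ C.edges))).image
        (fun e => (e.1, e.2)) ∪
      ((cycD ℓ).edges.filter (fun e => e ∉ C.edges)).image (fun e => (e.2, e.1)) := by
  apply Finset.ext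
  intro f
  constructor
  · intro hf
    obtain ⟨i, hi⟩ := pe_surj hC h4 f hf
    rcases pe_or_swap hC h4 i with hps | hps
    · apply Finset.mem_union_left
      apply Finset.mem_image.2
      refine ⟨f, ?_, Prod.mk.eta⟩
      apply Finset.mem_sdiff.2
      constructor
      · rw [← hi, hps]; exact PD_mem_D h4 i
      · simp only [Finset.mem_filter, not_and, not_not]
        intro _; exact hf
    · set g := PD i with hg
      have hgD : g ∈ (cycD ℓ).edges := PD_mem_D h4 i
      have hfg : f = (g.2, g.1) := by rw [← hi, hps]
      have hgC : g ∉ C.edges := by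
        intro hgC
        have hge : (g.1, g.2) ∈ C.edges := by rwa [Prod.mk.eta]
        have := C.antisymm g.1 g.2 hge
        apply this
        rwa [hfg] at hf
      apply Finset.mem_union_right
      apply Finset.mem_image.2
      exact ⟨g, Finset.mem_filter.2 ⟨hgD, hgC⟩, hfg.symm⟩
  · intro hf
    rcases Finset.mem_union.1 hf with hf' | hf'
    · obtain ⟨a, ha, hax⟩ := Finset.mem_image.1 hf'
      have ha' := Finset.mem_sdiff.1 ha
      have : a ∈ C.edges := by
        have h2 := ha'.2
        simp only [Finset.mem_filter, not_and, not_not] at h2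
        exact h2 ha'.1
      rw [← hax, Prod.mk.eta]
      exact this
    · obtain ⟨a, ha, hax⟩ := Finset.mem_image.1 hf'
      have ha' := Finset.mem_filter.1 ha
      obtain ⟨i, hi⟩ := Finset.mem_image.1 ((cycD_edges h4) ▸ ha'.1)
      rcases pe_or_swap hC h4 i with hps | hps
      · exfalso
        apply ha'.2
        rw [← hi.2, ← hps]
        exact pe_mem hC i
      · have : pe hC i = (a.2, a.1) := by rw [hps, hi.2]
        rw [← hax, ← this]
        exact pe_mem hC i

lemma gamma_sum (hC : IsCycleOrientation C) (h4 : 4 ≤ ℓ) :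
    ∑ τ : Fin ℓ → Fin 4, ∏ e ∈ C.edges, Mm (τ e.1) (τ e.2)
      = ((gammaCoeff C : ℤ) : ℝ) *
        ∑ σ : Fin ℓ → Fin 4, ∏ e ∈ (cycD ℓ).edges, Mm (σ e.1) (σ e.2) := by
  have hcard0 : Fintype.card (Fin ℓ) - Fintype.card (Fin ℓ) = 0 := by omega
  by_cases hobt : ObtainedBy (cycD ℓ) C.edges Even
  · obtain ⟨φ, hφ, R, hRsub, hReven, heq⟩ := hobt
    have := obt_sum (cycD ℓ) C.edges φ hφ R hRsub heq Mm Mm_antisymm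
    rw [hcard0, pow_zero] at this
    rw [this, hReven.neg_one_pow]
    have hγ : gammaCoeff C = 1 := by
      rw [gammaCoeff, if_pos]
      exact ⟨φ, hφ, R, hRsub, hReven, heq⟩
    rw [hγ]
    norm_num
  · set Rid := (cycD ℓ).edges.filter (fun e => e ∉ C.edges) with hRid
    have hRsub : Rid ⊆ (cycD ℓ).edges := Finset.filter_subset _ _
    have heq := id_obt hC h4
    have hodd : Odd Rid.card := by
      rw [← Nat.not_even_iff_odd]
      intro heven
      apply hobt
      exact ⟨id, Function.injective_id, Rid, hRsub, heven, heq⟩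
    have := obt_sum (cycD ℓ) C.edges id Function.injective_id Rid hRsub heq Mm Mm_antisymm
    rw [hcard0, pow_zero] at this
    rw [this, hodd.neg_one_pow]
    have hγ : gammaCoeff C = -1 := by
      rw [gammaCoeff, if_neg hobt]
    rw [hγ]
    norm_num

end GammaSec

end QRaux


-- Section G1 : the Q2 graph, its kernel sum, and kill lemmas
namespace QRaux

abbrev VQ : Type := (i : Fin 1) × Fin 3

def a0 : VQ := ⟨0, 0⟩
def a1 : VQ := ⟨0, 1⟩
def a2 : VQ := ⟨0, 2⟩

lemma Q2_edges : (QUnion 1 (fun _ : Fin 1 => 1)).edges = {(a1, a0), (a1, a2)} := by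
  decide

lemma Q2_card : (QUnion 1 (fun _ : Fin 1 => 1)).edges.card = 2 := by
  decide

lemma VQ_card : Fintype.card VQ = 3 := by decide

lemma sig_eq (u v : VQ) (h : (u.2 : ℕ) = (v.2 : ℕ)) : u = v := by
  rcases u with ⟨i, k⟩
  rcases v with ⟨j, l⟩
  have hij : i = j := Subsingleton.elim i j
  subst hij
  exact congrArg (Sigma.mk i) (Fin.ext h)

/-- evaluation of the Q2 kernel sum -/
def E3 : (VQ → Fin 4) ≃ (Fin 4 × Fin 4 × Fin 4) where
  toFun σ := (σ a0, σ a1, σ a2)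
  invFun p v := if (v.2 : ℕ) = 0 then p.1 else if (v.2 : ℕ) = 1 then p.2.1 else p.2.2
  left_inv σ := by
    funext v
    by_cases h0 : (v.2 : ℕ) = 0
    · have : v = a0 := sig_eq v a0 h0
      subst this
      simp [a0]
    · by_cases h1 : (v.2 : ℕ) = 1
      · have : v = a1 := sig_eq v a1 h1
        subst this
        simp [a1]
      · have h2 : (v.2 : ℕ) = 2 := by have := v.2.2; omega
        have : v = a2 := sig_eq v a2 h2
        subst this
        simp [a2]
  right_inv p := by
    refine Prod.ext rfl (Prod.ext rfl rfl)

lemma QX_val : ∑ σ : VQ → Fin 4,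
    ∏ e ∈ (QUnion 1 (fun _ : Fin 1 => 1)).edges, Xm (σ e.1) (σ e.2) = 16 := by
  have hne : ((a1, a0) : VQ × VQ) ≠ (a1, a2) := by decide
  have hper : ∀ σ : VQ → Fin 4,
      ∏ e ∈ (QUnion 1 (fun _ : Fin 1 => 1)).edges, Xm (σ e.1) (σ e.2)
      = Xm (σ a1) (σ a0) * Xm (σ a1) (σ a2) := by
    intro σ
    rw [Q2_edges, Finset.prod_pair hne]
  rw [Finset.sum_congr rfl (fun σ _ => hper σ)]
  rw [← Equiv.sum_comp E3.symm (fun σ => Xm (σ a1) (σ a0) * Xm (σ a1) (σ a2))]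
  have hev : ∀ p : Fin 4 × Fin 4 × Fin 4,
      Xm (E3.symm p a1) (E3.symm p a0) * Xm (E3.symm p a1) (E3.symm p a2)
      = Xm p.2.1 p.1 * Xm p.2.1 p.2.2 := by
    intro p; rfl
  rw [Finset.sum_congr rfl (fun p _ => hev p)]
  rw [Fintype.sum_prod_type]
  have hin : ∀ x : Fin 4, ∑ q : Fin 4 × Fin 4, Xm q.1 x * Xm q.1 q.2
      = ∑ y : Fin 4, Xm y x * ∑ z : Fin 4, Xm y z := by
    intro x
    rw [Fintype.sum_prod_type]
    refine Finset.sum_congr rfl (fun y _ => ?_)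
    dsimp only
    rw [← Finset.mul_sum]
  rw [Finset.sum_congr rfl (fun x (_ : x ∈ Finset.univ) => hin x)]
  rw [Finset.sum_comm]
  have : ∀ y : Fin 4, ∑ x : Fin 4, Xm y x * ∑ z : Fin 4, Xm y z
      = (∑ x : Fin 4, Xm y x) * (∑ z : Fin 4, Xm y z) := by
    intro y; rw [← Finset.sum_mul]
  rw [Finset.sum_congr rfl (fun y (_ : y ∈ Finset.univ) => this y)]
  exact Xm_rowsq

section KillSec

variable {ℓ : ℕ} [NeZero ℓ]

lemma kill_leaf (A : Fin 4 → Fin 4 → ℝ) (hrow : ∀ w, ∑ b, A w b = 0)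
    (hcol : ∀ w, ∑ a, A a w = 0) (F : Finset (Fin ℓ × Fin ℓ)) (v : Fin ℓ)
    (e₀ : Fin ℓ × Fin ℓ) (he₀ : e₀ ∈ F)
    (hv : (e₀.1 = v ∧ e₀.2 ≠ v) ∨ (e₀.2 = v ∧ e₀.1 ≠ v))
    (hothers : ∀ e ∈ F, e ≠ e₀ → e.1 ≠ v ∧ e.2 ≠ v) :
    ∑ τ : Fin ℓ → Fin 4, ∏ e ∈ F, A (τ e.1) (τ e.2) = 0 := by
  apply sum_update_eq_zero v
  intro τ
  have hsplit : ∀ a : Fin 4,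
      ∏ e ∈ F, A (Function.update τ v a e.1) (Function.update τ v a e.2)
      = A (Function.update τ v a e₀.1) (Function.update τ v a e₀.2) *
        ∏ e ∈ F.erase e₀, A (τ e.1) (τ e.2) := by
    intro a
    rw [← Finset.mul_prod_erase F _ he₀]
    congr 1
    refine Finset.prod_congr rfl (fun e he => ?_)
    have hee := Finset.mem_erase.1 he
    have h1 := hothers e hee.2 hee.1
    rw [Function.update_of_ne h1.1, Function.update_of_ne h1.2]
  rw [Finset.sum_congr rfl (fun a _ => hsplit a), ← Finset.sum_mul]
  rcases hv with ⟨h1, h2⟩ | ⟨h1, h2⟩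
  · have : ∀ a : Fin 4,
        A (Function.update τ v a e₀.1) (Function.update τ v a e₀.2) = A a (τ e₀.2) := by
      intro a
      rw [h1, Function.update_self, Function.update_of_ne h2]
    rw [Finset.sum_congr rfl (fun a _ => this a), hcol, zero_mul]
  · have : ∀ a : Fin 4,
        A (Function.update τ v a e₀.1) (Function.update τ v a e₀.2) = A (τ e₀.1) a := by
      intro a
      rw [h1, Function.update_self, Function.update_of_ne h2]
    rw [Finset.sum_congr rfl (fun a _ => this a), hrow, zero_mul]

lemma kill_two (A : Fin 4 → Fin 4 → ℝ) (htot : ∑ a, ∑ b, A a b = 0)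
    (F : Finset (Fin ℓ × Fin ℓ)) (e₀ : Fin ℓ × Fin ℓ) (he₀ : e₀ ∈ F)
    (hne : e₀.1 ≠ e₀.2)
    (hothers : ∀ e ∈ F, e ≠ e₀ → e.1 ≠ e₀.1 ∧ e.1 ≠ e₀.2 ∧ e.2 ≠ e₀.1 ∧ e.2 ≠ e₀.2) :
    ∑ τ : Fin ℓ → Fin 4, ∏ e ∈ F, A (τ e.1) (τ e.2) = 0 := by
  apply sum_update2_eq_zero e₀.1 e₀.2 hne
  intro τ
  have hsplit : ∀ a b : Fin 4,
      (∏ e ∈ F, A ((Function.update (Function.update τ e₀.1 a) e₀.2 b) e.1)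
        ((Function.update (Function.update τ e₀.1 a) e₀.2 b) e.2))
      = A a b * ∏ e ∈ F.erase e₀, A (τ e.1) (τ e.2) := by
    intro a b
    rw [← Finset.mul_prod_erase F _ he₀]
    congr 1
    · rw [show e₀ = (e₀.1, e₀.2) from rfl]
      dsimp only
      rw [Function.update_of_ne hne, Function.update_self, Function.update_self]
    · refine Finset.prod_congr rfl (fun e he => ?_)
      have hee := Finset.mem_erase.1 he
      have h1 := hothers e hee.2 hee.1
      rw [Function.update_of_ne h1.2.2.2, Function.update_of_ne h1.2.1,
        Function.update_of_ne h1.2.2.1, Function.update_of_ne h1.1]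
  rw [Finset.sum_congr rfl (fun a _ => Finset.sum_congr rfl (fun b _ => hsplit a b))]
  have : ∀ a : Fin 4, ∑ b, A a b * ∏ e ∈ F.erase e₀, A (τ e.1) (τ e.2)
      = (∑ b, A a b) * ∏ e ∈ F.erase e₀, A (τ e.1) (τ e.2) := by
    intro a; rw [← Finset.sum_mul]
  rw [Finset.sum_congr rfl (fun a _ => this a), ← Finset.sum_mul]
  rw [show (∑ a : Fin 4, ∑ b, A a b) = 0 from htot, zero_mul]

end KillSec

end QRaux


-- Section G2 : shape constructions and the per-subset value
namespace QRaux

section ShapeSec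

variable {ℓ : ℕ}

def mk3 (p q r : Fin ℓ) : VQ → Fin ℓ := fun v =>
  if (v.2 : ℕ) = 0 then p else if (v.2 : ℕ) = 1 then q else r

lemma mk3_a0 (p q r : Fin ℓ) : mk3 p q r a0 = p := by simp [mk3, a0]
lemma mk3_a1 (p q r : Fin ℓ) : mk3 p q r a1 = q := by simp [mk3, a1]
lemma mk3_a2 (p q r : Fin ℓ) : mk3 p q r a2 = r := by simp [mk3, a2]

lemma mk3_inj (p q r : Fin ℓ) (hpq : p ≠ q) (hpr : p ≠ r) (hqr : q ≠ r) :
    Function.Injective (mk3 p q r) := by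
  intro u v h
  unfold mk3 at h
  apply sig_eq
  have hu := u.2.2
  have hv := v.2.2
  split_ifs at h
  all_goals first
    | omega
    | exact absurd h hpq
    | exact absurd h hpr
    | exact absurd h hqr
    | exact absurd h.symm hpq
    | exact absurd h.symm hpr
    | exact absurd h.symm hqr

lemma obtE_out (x y z : Fin ℓ) (hyx : y ≠ x) (hyz : y ≠ z) (hxz : x ≠ z) :
    ObtainedBy (QUnion 1 (fun _ : Fin 1 => 1)) ({(x, y), (x, z)} : Finset (Fin ℓ × Fin ℓ)) Even := by
  refine ⟨mk3 y x z, mk3_inj y x z hyx hyz hxz, ∅, Finset.empty_subset _, by simp, ?_⟩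
  rw [Finset.sdiff_empty, Finset.image_empty, Finset.union_empty, Q2_edges]
  rw [Finset.image_insert, Finset.image_singleton]
  dsimp only
  rw [mk3_a0, mk3_a1, mk3_a2]

lemma obtE_in (x y z : Fin ℓ) (hyx : y ≠ x) (hyz : y ≠ z) (hxz : x ≠ z) :
    ObtainedBy (QUnion 1 (fun _ : Fin 1 => 1)) ({(y, x), (z, x)} : Finset (Fin ℓ × Fin ℓ)) Even := by
  refine ⟨mk3 y x z, mk3_inj y x z hyx hyz hxz,
    (QUnion 1 (fun _ : Fin 1 => 1)).edges, Finset.Subset.refl _, ?_, ?_⟩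
  · rw [Q2_card]; exact even_two
  · rw [Finset.sdiff_self, Finset.image_empty, Finset.empty_union, Q2_edges]
    rw [Finset.image_insert, Finset.image_singleton]
    dsimp only
    rw [mk3_a0, mk3_a1, mk3_a2]

lemma obtO_path (x y z : Fin ℓ) (hxy : x ≠ y) (hxz : x ≠ z) (hyz : y ≠ z) :
    ObtainedBy (QUnion 1 (fun _ : Fin 1 => 1)) ({(x, y), (y, z)} : Finset (Fin ℓ × Fin ℓ)) Odd := by
  refine ⟨mk3 x y z, mk3_inj x y z hxy hxz hyz, {(a1, a0)}, ?_, ?_, ?_⟩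
  · rw [Q2_edges]
    exact Finset.singleton_subset_iff.2 (Finset.mem_insert_self _ _)
  · rw [Finset.card_singleton]; exact odd_one
  · have hsd : (QUnion 1 (fun _ : Fin 1 => 1)).edges \ {(a1, a0)} = {(a1, a2)} := by decide
    rw [hsd, Finset.image_singleton, Finset.image_singleton]
    dsimp only
    rw [mk3_a0, mk3_a1, mk3_a2]
    rw [Finset.union_comm, ← Finset.insert_eq]

end ShapeSec

section BXSec

variable {ℓ : ℕ} [NeZero ℓ]

lemma obt_BX_gen (h4 : 4 ≤ ℓ) (F : Finset (Fin ℓ × Fin ℓ)) (r : ℕ → Prop)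
    (hobt : ObtainedBy (QUnion 1 (fun _ : Fin 1 => 1)) F r) :
    F.card = 2 ∧ ∃ m : ℕ, r m ∧
      ∑ τ : Fin ℓ → Fin 4, ∏ e ∈ F, Xm (τ e.1) (τ e.2) = (-1 : ℝ)^m * 4^(ℓ-3) * 16 := by
  obtain ⟨φ, hφ, R, hRsub, hr, heq⟩ := hobt
  constructor
  · rw [obt_card _ F φ hφ R hRsub heq, Q2_card]
  · refine ⟨R.card, hr, ?_⟩
    have hsum := obt_sum _ F φ hφ R hRsub heq Xm Xm_antisymm
    rw [hsum, QX_val]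
    have hcards : Fintype.card (Fin ℓ) -
        Fintype.card ((i : Fin 1) × Fin (2 * (fun _ : Fin 1 => 1) i + 1)) = ℓ - 3 := by
      rw [Fintype.card_fin]
      congr 1
    rw [hcards]

lemma pow4_arith (h4 : 4 ≤ ℓ) : (4:ℝ)^(ℓ-3) * 16 = 4^(ℓ-1) := by
  rw [show (16:ℝ) = 4^2 by norm_num, ← pow_add]
  congr 1
  omega

lemma obt_BX_even (h4 : 4 ≤ ℓ) (F : Finset (Fin ℓ × Fin ℓ))
    (hobt : ObtainedBy (QUnion 1 (fun _ : Fin 1 => 1)) F Even) :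
    ∑ τ : Fin ℓ → Fin 4, ∏ e ∈ F, Xm (τ e.1) (τ e.2) = 4^(ℓ-1) := by
  obtain ⟨_, m, hm, hval⟩ := obt_BX_gen h4 F Even hobt
  rw [hval, hm.neg_one_pow, one_mul, pow4_arith h4]

lemma obt_BX_odd (h4 : 4 ≤ ℓ) (F : Finset (Fin ℓ × Fin ℓ))
    (hobt : ObtainedBy (QUnion 1 (fun _ : Fin 1 => 1)) F Odd) :
    ∑ τ : Fin ℓ → Fin 4, ∏ e ∈ F, Xm (τ e.1) (τ e.2) = -(4^(ℓ-1)) := by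
  obtain ⟨_, m, hm, hval⟩ := obt_BX_gen h4 F Odd hobt
  rw [hval, hm.neg_one_pow]
  rw [show (-1:ℝ) * 4^(ℓ-3) * 16 = -(4^(ℓ-3) * 16) from by ring, pow4_arith h4]

lemma obt_card2 (h4 : 4 ≤ ℓ) (F : Finset (Fin ℓ × Fin ℓ)) (r : ℕ → Prop)
    (hobt : ObtainedBy (QUnion 1 (fun _ : Fin 1 => 1)) F r) : F.card = 2 :=
  (obt_BX_gen h4 F r hobt).1

variable {C : OrientedGraph (Fin ℓ)}

lemma BX_val (h4 : 4 ≤ ℓ) (F : Finset (Fin ℓ × Fin ℓ))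
    (hFP : F ∈ C.edges.powerset) (h2 : F.card = 2) :
    ∑ τ : Fin ℓ → Fin 4, ∏ e ∈ F, Xm (τ e.1) (τ e.2)
      = 4^(ℓ-1) * ((if ObtainedBy (QUnion 1 (fun _ : Fin 1 => 1)) F Even then (1:ℝ) else 0)
        - (if ObtainedBy (QUnion 1 (fun _ : Fin 1 => 1)) F Odd then (1:ℝ) else 0)) := by
  have hsub : F ⊆ C.edges := Finset.mem_powerset.1 hFP
  have hpow_pos : (0:ℝ) < 4^(ℓ-1) := by positivity
  by_cases hE : ObtainedBy (QUnion 1 (fun _ : Fin 1 => 1)) F Even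
  · have hO : ¬ ObtainedBy (QUnion 1 (fun _ : Fin 1 => 1)) F Odd := by
      intro hO
      have h1 := obt_BX_even h4 F hE
      have h2' := obt_BX_odd h4 F hO
      rw [h1] at h2'
      linarith
    rw [if_pos hE, if_neg hO, obt_BX_even h4 F hE]
    ring
  · by_cases hO : ObtainedBy (QUnion 1 (fun _ : Fin 1 => 1)) F Odd
    · rw [if_neg hE, if_pos hO, obt_BX_odd h4 F hO]
      ring
    · rw [if_neg hE, if_neg hO]
      rw [show (4:ℝ)^(ℓ-1) * ((0:ℝ) - 0) = 0 from by ring]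
      -- decompose F as a pair
      obtain ⟨e, f, hef, rfl⟩ := Finset.card_eq_two.1 h2
      have he : e ∈ C.edges := hsub (Finset.mem_insert_self e {f})
      have hf : f ∈ C.edges := hsub (by simp)
      have he1 : e.1 ≠ e.2 := C.irrefl e he
      have hf1 : f.1 ≠ f.2 := C.irrefl f hf
      by_cases c1 : e.1 = f.1
      · exfalso
        apply hE
        have hfe : f = (e.1, f.2) := by rw [c1]
        have hee : e = (e.1, e.2) := Prod.mk.eta.symm
        have h22 : e.2 ≠ f.2 := by
          intro hcon
          exact hef (Prod.ext c1 hcon)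
        have hset : ({e, f} : Finset (Fin ℓ × Fin ℓ)) = {(e.1, e.2), (e.1, f.2)} := by
          rw [← hee, ← hfe]
        rw [hset]
        exact obtE_out e.1 e.2 f.2 he1.symm h22 (c1 ▸ hf1)
      · by_cases c2 : e.2 = f.2
        · exfalso
          apply hE
          have hfe : f = (f.1, e.2) := by rw [c2]
          have hee : e = (e.1, e.2) := Prod.mk.eta.symm
          have h11 : e.1 ≠ f.1 := by
            intro hcon
            exact hef (Prod.ext hcon c2)
          have hset : ({e, f} : Finset (Fin ℓ × Fin ℓ)) = {(e.1, e.2), (f.1, e.2)} := by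
            rw [← hee, ← hfe]
          rw [hset]
          exact obtE_in e.2 e.1 f.1 he1 h11 (fun hcon => hf1 (c2 ▸ hcon).symm)
        · by_cases c3 : e.2 = f.1
          · exfalso
            apply hO
            have hfe : f = (e.2, f.2) := by rw [c3]
            have hee : e = (e.1, e.2) := Prod.mk.eta.symm
            have h13 : e.1 ≠ f.2 := by
              intro hcon
              have : (f.1, f.2) ∈ C.edges := by rwa [Prod.mk.eta]
              exact C.antisymm f.1 f.2 this (by
                have : (f.2, f.1) = e := Prod.ext hcon.symm c3.symm
                rwa [this])
            have hset : ({e, f} : Finset (Fin ℓ × Fin ℓ)) = {(e.1, e.2), (e.2, f.2)} := by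
              rw [← hee, ← hfe]
            rw [hset]
            exact obtO_path e.1 e.2 f.2 he1 h13 (c3 ▸ hf1)
          · by_cases c4 : e.1 = f.2
            · exfalso
              apply hO
              have hfe : f = (f.1, e.1) := by rw [c4]
              have hee : e = (e.1, e.2) := Prod.mk.eta.symm
              have h21 : f.1 ≠ e.2 := fun hcon => c3 hcon.symm
              have hset : ({e, f} : Finset (Fin ℓ × Fin ℓ)) = {(f.1, e.1), (e.1, e.2)} := by
                rw [← hee, ← hfe, Finset.pair_comm]
              rw [hset]
              exact obtO_path f.1 e.1 e.2 (c4 ▸ hf1) h21 he1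
            · -- disjoint pair
              apply kill_two Xm Xm_total _ e (Finset.mem_insert_self e {f}) he1
              intro e' he' hne'
              have : e' = f := by
                rcases Finset.mem_insert.1 he' with h | h
                · exact absurd h hne'
                · simpa using h
              subst this
              exact ⟨fun hc => c1 hc.symm, fun hc => c3 hc.symm,
                fun hc => c4 hc.symm, fun hc => c2 hc.symm⟩

end BXSec

end QRaux


-- Section G3/H : alpha summation; the step-kernel integral formula
namespace QRaux

section AlphaSum

variable {ℓ : ℕ} [NeZero ℓ] {C : OrientedGraph (Fin ℓ)}

lemma alpha_sum (h4 : 4 ≤ ℓ) :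
    ∑ F ∈ C.edges.powerset.filter (fun F => F.card = 2),
      (∑ τ : Fin ℓ → Fin 4, ∏ e ∈ F, Xm (τ e.1) (τ e.2))
    = 4^(ℓ-1) * ((alphaCoeff C (fun _ : Fin 1 => 1) : ℤ) : ℝ) := by
  classical
  set pE := fun F : Finset (Fin ℓ × Fin ℓ) => ObtainedBy (QUnion 1 (fun _ : Fin 1 => 1)) F Even with hpE
  set pO := fun F : Finset (Fin ℓ × Fin ℓ) => ObtainedBy (QUnion 1 (fun _ : Fin 1 => 1)) F Odd with hpO
  have hstep1 : ∑ F ∈ C.edges.powerset.filter (fun F => F.card = 2),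
      (∑ τ : Fin ℓ → Fin 4, ∏ e ∈ F, Xm (τ e.1) (τ e.2))
      = ∑ F ∈ C.edges.powerset.filter (fun F => F.card = 2),
        4^(ℓ-1) * ((if pE F then (1:ℝ) else 0) - (if pO F then (1:ℝ) else 0)) := by
    refine Finset.sum_congr rfl (fun F hF => ?_)
    have h1 := Finset.mem_filter.1 hF
    exact BX_val h4 F h1.1 h1.2
  rw [hstep1, ← Finset.mul_sum]
  congr 1
  have hext : ∑ F ∈ C.edges.powerset.filter (fun F => F.card = 2),
      ((if pE F then (1:ℝ) else 0) - (if pO F then (1:ℝ) else 0))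
      = ∑ F ∈ C.edges.powerset,
      ((if pE F then (1:ℝ) else 0) - (if pO F then (1:ℝ) else 0)) := by
    apply Finset.sum_subset (Finset.filter_subset _ _)
    intro F hFP hFn
    have hE : ¬ pE F := by
      intro hE
      exact hFn (Finset.mem_filter.2 ⟨hFP, obt_card2 h4 F Even hE⟩)
    have hO : ¬ pO F := by
      intro hO
      exact hFn (Finset.mem_filter.2 ⟨hFP, obt_card2 h4 F Odd hO⟩)
    rw [if_neg hE, if_neg hO, sub_zero]
  rw [hext, Finset.sum_sub_distrib]
  have hcE : ∑ F ∈ C.edges.powerset, (if pE F then (1:ℝ) else 0)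
      = ((C.edges.powerset.filter pE).card : ℝ) := by
    rw [Finset.card_filter]
    push_cast
    rfl
  have hcO : ∑ F ∈ C.edges.powerset, (if pO F then (1:ℝ) else 0)
      = ((C.edges.powerset.filter pO).card : ℝ) := by
    rw [Finset.card_filter]
    push_cast
    rfl
  rw [hcE, hcO]
  rw [alphaCoeff]
  push_cast
  rfl

end AlphaSum

-- the step partition of [0,1]
def kap : ℝ → Fin 4 := fun x =>
  if x < 1/4 then 0 else if x < 1/2 then 1 else if x < 3/4 then 2 else 3

def Jset : Fin 4 → Set ℝ := fun k => Set.Icc 0 1 ∩ kap ⁻¹' {k}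

lemma kap_measurable : Measurable kap := by
  unfold kap
  refine Measurable.ite ?_ measurable_const
    (Measurable.ite ?_ measurable_const
      (Measurable.ite ?_ measurable_const measurable_const)) <;>
    exact measurableSet_lt measurable_id measurable_const

lemma J0_eq : Jset 0 = Set.Ico 0 (1/4) := by
  ext x
  constructor
  · rintro ⟨⟨h0, h1⟩, hk⟩
    simp only [Set.mem_preimage, Set.mem_singleton_iff] at hk
    unfold kap at hk
    split_ifs at hk with ha hb hc
    · exact ⟨h0, ha⟩
    · exact absurd hk (by decide)
    · exact absurd hk (by decide)
    · exact absurd hk (by decide)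
  · rintro ⟨h0, h1⟩
    refine ⟨⟨h0, by linarith⟩, ?_⟩
    simp only [Set.mem_preimage, Set.mem_singleton_iff]
    unfold kap
    rw [if_pos h1]

lemma J1_eq : Jset 1 = Set.Ico (1/4) (1/2) := by
  ext x
  constructor
  · rintro ⟨⟨h0, h1⟩, hk⟩
    simp only [Set.mem_preimage, Set.mem_singleton_iff] at hk
    unfold kap at hk
    split_ifs at hk with ha hb hc
    · exact absurd hk (by decide)
    · exact ⟨by linarith, hb⟩
    · exact absurd hk (by decide)
    · exact absurd hk (by decide)
  · rintro ⟨h0, h1⟩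
    refine ⟨⟨by linarith, by linarith⟩, ?_⟩
    simp only [Set.mem_preimage, Set.mem_singleton_iff]
    unfold kap
    rw [if_neg (by linarith), if_pos h1]

lemma J2_eq : Jset 2 = Set.Ico (1/2) (3/4) := by
  ext x
  constructor
  · rintro ⟨⟨h0, h1⟩, hk⟩
    simp only [Set.mem_preimage, Set.mem_singleton_iff] at hk
    unfold kap at hk
    split_ifs at hk with ha hb hc
    · exact absurd hk (by decide)
    · exact absurd hk (by decide)
    · exact ⟨by linarith, hc⟩
    · exact absurd hk (by decide)
  · rintro ⟨h0, h1⟩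
    refine ⟨⟨by linarith, by linarith⟩, ?_⟩
    simp only [Set.mem_preimage, Set.mem_singleton_iff]
    unfold kap
    rw [if_neg (by linarith), if_neg (by linarith), if_pos h1]

lemma J3_eq : Jset 3 = Set.Icc (3/4) 1 := by
  ext x
  constructor
  · rintro ⟨⟨h0, h1⟩, hk⟩
    simp only [Set.mem_preimage, Set.mem_singleton_iff] at hk
    unfold kap at hk
    split_ifs at hk with ha hb hc
    · exact absurd hk (by decide)
    · exact absurd hk (by decide)
    · exact absurd hk (by decide)
    · exact ⟨by linarith, h1⟩
  · rintro ⟨h0, h1⟩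
    refine ⟨⟨by linarith, h1⟩, ?_⟩
    simp only [Set.mem_preimage, Set.mem_singleton_iff]
    unfold kap
    rw [if_neg (by linarith), if_neg (by linarith), if_neg (by linarith)]

lemma J_mble : ∀ k, MeasurableSet (Jset k) := by
  intro k
  match k with
  | 0 => rw [J0_eq]; exact measurableSet_Ico
  | 1 => rw [J1_eq]; exact measurableSet_Ico
  | 2 => rw [J2_eq]; exact measurableSet_Ico
  | 3 => rw [J3_eq]; exact measurableSet_Icc

lemma vol_J : ∀ k, MeasureTheory.volume (Jset k) = ENNReal.ofReal (1/4) := by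
  intro k
  match k with
  | 0 => rw [J0_eq, Real.volume_Ico]; norm_num
  | 1 => rw [J1_eq, Real.volume_Ico]; norm_num
  | 2 => rw [J2_eq, Real.volume_Ico]; norm_num
  | 3 => rw [J3_eq, Real.volume_Icc]; norm_num

lemma J_subset : ∀ k, Jset k ⊆ Set.Icc (0:ℝ) 1 := fun k => Set.inter_subset_left

lemma mem_J_kap {x : ℝ} (h : x ∈ Set.Icc (0:ℝ) 1) : x ∈ Jset (kap x) := ⟨h, rfl⟩

lemma kap_eq_of_mem {x : ℝ} {k : Fin 4} (h : x ∈ Jset k) : kap x = k := h.2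

lemma homDensity_step (ℓ : ℕ) (C : OrientedGraph (Fin ℓ)) (N : Fin 4 → Fin 4 → ℝ) :
    homDensity C (fun x y => 1/2 + N (kap x) (kap y))
      = (1/4 : ℝ)^ℓ * ∑ τ : Fin ℓ → Fin 4, ∏ e ∈ C.edges, (1/2 + N (τ e.1) (τ e.2)) := by
  classical
  unfold homDensity
  set cube := Set.univ.pi (fun _ : Fin ℓ => Set.Icc (0:ℝ) 1) with hcubedef
  have hcube : MeasurableSet cube := MeasurableSet.univ_pi (fun _ => measurableSet_Icc)
  set Box : (Fin ℓ → Fin 4) → Set (Fin ℓ → ℝ) :=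
    fun τ => Set.univ.pi (fun v => Jset (τ v)) with hBoxdef
  have hBox : ∀ τ, MeasurableSet (Box τ) :=
    fun τ => MeasurableSet.univ_pi (fun v => J_mble _)
  have hBoxsub : ∀ τ, Box τ ⊆ cube := by
    intro τ x hx
    rw [hcubedef, Set.mem_univ_pi]
    intro v
    exact J_subset (τ v) (Set.mem_univ_pi.1 hx v)
  have hvolBox : ∀ τ, MeasureTheory.volume (Box τ) = (ENNReal.ofReal (1/4))^ℓ := by
    intro τ
    rw [hBoxdef]
    rw [MeasureTheory.volume_pi_pi]
    rw [Finset.prod_congr rfl (fun v (_ : v ∈ Finset.univ) => vol_J (τ v))]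
    rw [Finset.prod_const, Finset.card_univ, Fintype.card_fin]
  have hEq : Set.EqOn
      (fun x : Fin ℓ → ℝ => ∏ e ∈ C.edges, ((1:ℝ)/2 + N (kap (x e.1)) (kap (x e.2))))
      (fun x : Fin ℓ → ℝ => ∑ τ : Fin ℓ → Fin 4,
        (Box τ).indicator (fun _ => ∏ e ∈ C.edges, ((1:ℝ)/2 + N (τ e.1) (τ e.2))) x)
      cube := by
    intro x hx
    have hxv : ∀ v, x v ∈ Set.Icc (0:ℝ) 1 := Set.mem_univ_pi.1 hx
    have hmem : ∀ τ : Fin ℓ → Fin 4, x ∈ Box τ ↔ τ = (fun v => kap (x v)) := by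
      intro τ
      constructor
      · intro hxB
        funext v
        exact (kap_eq_of_mem (Set.mem_univ_pi.1 hxB v)).symm
      · intro hτ
        subst hτ
        rw [hBoxdef, Set.mem_univ_pi]
        intro v
        exact mem_J_kap (hxv v)
    show _ = ∑ τ : Fin ℓ → Fin 4, _
    rw [Finset.sum_congr rfl (fun τ (_ : τ ∈ Finset.univ) => Set.indicator_apply (Box τ) _ x)]
    have hite : ∀ τ : Fin ℓ → Fin 4,
        (if x ∈ Box τ then ∏ e ∈ C.edges, ((1:ℝ)/2 + N (τ e.1) (τ e.2)) else 0)
        = (if τ = (fun v => kap (x v)) then ∏ e ∈ C.edges, ((1:ℝ)/2 + N (τ e.1) (τ e.2)) else 0) := by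
      intro τ
      by_cases hτ : x ∈ Box τ
      · rw [if_pos hτ, if_pos ((hmem τ).1 hτ)]
      · rw [if_neg hτ, if_neg (fun hc => hτ ((hmem τ).2 hc))]
    rw [Finset.sum_congr rfl (fun τ _ => hite τ)]
    rw [Finset.sum_ite_eq' Finset.univ (fun v => kap (x v))
      (fun τ => ∏ e ∈ C.edges, ((1:ℝ)/2 + N (τ e.1) (τ e.2)))]
    rw [if_pos (Finset.mem_univ _)]
  rw [MeasureTheory.setIntegral_congr_fun hcube hEq]
  have hint : ∀ τ : Fin ℓ → Fin 4, MeasureTheory.Integrable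
      ((Box τ).indicator (fun _ => ∏ e ∈ C.edges, ((1:ℝ)/2 + N (τ e.1) (τ e.2))))
      (MeasureTheory.volume.restrict cube) := by
    intro τ
    rw [MeasureTheory.integrable_indicator_iff (hBox τ)]
    refine MeasureTheory.integrableOn_const (ne_of_lt ?_)
    calc (MeasureTheory.volume.restrict cube) (Box τ)
        ≤ MeasureTheory.volume (Box τ) := MeasureTheory.Measure.restrict_apply_le _ _
      _ = (ENNReal.ofReal (1/4))^ℓ := hvolBox τ
      _ < ⊤ := by
          apply ENNReal.pow_lt_top
          exact ENNReal.ofReal_lt_top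
  rw [MeasureTheory.integral_finset_sum Finset.univ (fun τ _ => hint τ)]
  have hper : ∀ τ : Fin ℓ → Fin 4,
      ∫ x in cube, (Box τ).indicator
        (fun _ => ∏ e ∈ C.edges, ((1:ℝ)/2 + N (τ e.1) (τ e.2))) x
      = (1/4:ℝ)^ℓ * ∏ e ∈ C.edges, ((1:ℝ)/2 + N (τ e.1) (τ e.2)) := by
    intro τ
    rw [MeasureTheory.setIntegral_indicator (hBox τ)]
    rw [Set.inter_eq_self_of_subset_right (hBoxsub τ)]
    rw [MeasureTheory.setIntegral_const]
    rw [MeasureTheory.measureReal_def, hvolBox τ]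
    rw [smul_eq_mul]
    congr 1
    rw [ENNReal.toReal_pow, ENNReal.toReal_ofReal (by norm_num)]
  rw [Finset.sum_congr rfl (fun τ _ => hper τ)]
  rw [← Finset.mul_sum]

lemma step_tournamenton (N : Fin 4 → Fin 4 → ℝ) (hanti : ∀ i j, N j i = -N i j)
    (hbd : ∀ i j, |N i j| ≤ 1/2) :
    IsTournamenton (fun x y => 1/2 + N (kap x) (kap y)) := by
  refine ⟨?_, ?_, ?_⟩
  · have hrw : (Function.uncurry fun x y => 1/2 + N (kap x) (kap y))
        = fun p : ℝ × ℝ => 1/2 + ∑ i : Fin 4,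
            (if kap p.1 = i then (∑ j : Fin 4, if kap p.2 = j then N i j else 0) else 0) := by
      funext p
      show (1:ℝ)/2 + N (kap p.1) (kap p.2) = _
      congr 1
      rw [Finset.sum_ite_eq Finset.univ (kap p.1)
        (fun i => ∑ j : Fin 4, if kap p.2 = j then N i j else 0)]
      rw [if_pos (Finset.mem_univ _)]
      rw [Finset.sum_ite_eq Finset.univ (kap p.2) (fun j => N (kap p.1) j)]
      rw [if_pos (Finset.mem_univ _)]
    rw [hrw]
    apply Measurable.add measurable_const
    apply Finset.measurable_sum
    intro i _
    have hs1 : MeasurableSet {p : ℝ × ℝ | kap p.1 = i} := by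
      have : {p : ℝ × ℝ | kap p.1 = i} = (fun p : ℝ × ℝ => kap p.1) ⁻¹' {i} := rfl
      rw [this]
      exact (kap_measurable.comp measurable_fst) (measurableSet_singleton i)
    apply Measurable.ite hs1 _ measurable_const
    apply Finset.measurable_sum
    intro j _
    have hs2 : MeasurableSet {p : ℝ × ℝ | kap p.2 = j} := by
      have : {p : ℝ × ℝ | kap p.2 = j} = (fun p : ℝ × ℝ => kap p.2) ⁻¹' {j} := rfl
      rw [this]
      exact (kap_measurable.comp measurable_snd) (measurableSet_singleton j)
    exact Measurable.ite hs2 measurable_const measurable_const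
  · intro x _ y _
    have := abs_le.1 (hbd (kap x) (kap y))
    constructor <;> linarith [this.1, this.2]
  · intro x _ y _
    show (1/2 + N (kap x) (kap y)) + (1/2 + N (kap y) (kap x)) = 1
    rw [hanti (kap y) (kap x)]
    ring

end QRaux


-- Section I : expansion of the step-kernel sum and endpoint estimates
namespace QRaux

section ExpandSec

variable {ℓ : ℕ} [NeZero ℓ] {C : OrientedGraph (Fin ℓ)}

lemma expand_sum (hcard : C.edges.card = ℓ) (c : ℝ) (A : Fin 4 → Fin 4 → ℝ) :
    ∑ τ : Fin ℓ → Fin 4, ∏ e ∈ C.edges, ((1:ℝ)/2 + c * A (τ e.1) (τ e.2))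
      = ∑ F ∈ C.edges.powerset, ((1:ℝ)/2)^(ℓ - F.card) * c^F.card *
          (∑ τ : Fin ℓ → Fin 4, ∏ e ∈ F, A (τ e.1) (τ e.2)) := by
  classical
  have hper : ∀ τ : Fin ℓ → Fin 4,
      ∏ e ∈ C.edges, ((1:ℝ)/2 + c * A (τ e.1) (τ e.2))
      = ∑ F ∈ C.edges.powerset, ((1:ℝ)/2)^(ℓ - F.card) * c^F.card *
          ∏ e ∈ F, A (τ e.1) (τ e.2) := by
    intro τ
    have h1 : ∀ e ∈ C.edges, ((1:ℝ)/2 + c * A (τ e.1) (τ e.2))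
        = (c * A (τ e.1) (τ e.2) + 1/2) := fun e _ => by ring
    rw [Finset.prod_congr rfl h1]
    rw [Finset.prod_add (fun e => c * A (τ e.1) (τ e.2)) (fun _ => (1:ℝ)/2) C.edges]
    refine Finset.sum_congr rfl (fun F hF => ?_)
    have hFsub := Finset.mem_powerset.1 hF
    rw [Finset.prod_mul_distrib, Finset.prod_const, Finset.prod_const]
    rw [Finset.card_sdiff_of_subset hFsub, hcard]
    ring
  rw [Finset.sum_congr rfl (fun τ _ => hper τ), Finset.sum_comm]
  refine Finset.sum_congr rfl (fun F _ => ?_)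
  rw [← Finset.mul_sum]

lemma sum_empty_prod :
    ∑ τ : Fin ℓ → Fin 4, ∏ e ∈ (∅ : Finset (Fin ℓ × Fin ℓ)), Xm (τ e.1) (τ e.2) = 4^ℓ ∧
    ∑ τ : Fin ℓ → Fin 4, ∏ e ∈ (∅ : Finset (Fin ℓ × Fin ℓ)), Mm (τ e.1) (τ e.2) = 4^ℓ := by
  constructor <;>
  · rw [Finset.sum_congr rfl (fun τ _ => Finset.prod_empty)]
    rw [Finset.sum_const, Finset.card_univ, Fintype.card_fun, Fintype.card_fin, Fintype.card_fin]
    simp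

lemma two_pow_eq : ((1:ℝ)/2)^ℓ * 4^ℓ = 2^ℓ := by
  rw [← mul_pow]
  norm_num

lemma T0_val (hC : IsCycleOrientation C) (h4 : 4 ≤ ℓ) :
    ∑ τ : Fin ℓ → Fin 4, ∏ e ∈ C.edges, ((1:ℝ)/2 + (1/4) * Mm (τ e.1) (τ e.2))
      = 2^ℓ + (1/4:ℝ)^ℓ * (((gammaCoeff C : ℤ) : ℝ) *
          ∑ σ : Fin ℓ → Fin 4, ∏ e ∈ (cycD ℓ).edges, Mm (σ e.1) (σ e.2)) := by
  classical
  have hcard := card_edges hC h4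
  rw [expand_sum hcard (1/4) Mm]
  have hEmpP : (∅ : Finset (Fin ℓ × Fin ℓ)) ∈ C.edges.powerset := Finset.empty_mem_powerset _
  have hEP : C.edges ∈ C.edges.powerset := Finset.mem_powerset_self _
  have hne : C.edges ≠ (∅ : Finset (Fin ℓ × Fin ℓ)) := by
    intro hcon
    rw [hcon] at hcard
    simp at hcard
    omega
  have hEP' : C.edges ∈ C.edges.powerset.erase ∅ := Finset.mem_erase.2 ⟨hne, hEP⟩
  rw [← Finset.add_sum_erase _ _ hEmpP, ← Finset.add_sum_erase _ _ hEP']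
  have htEmp : ((1:ℝ)/2)^(ℓ - (∅ : Finset (Fin ℓ × Fin ℓ)).card) * (1/4:ℝ)^(∅ : Finset (Fin ℓ × Fin ℓ)).card *
      (∑ τ : Fin ℓ → Fin 4, ∏ e ∈ (∅ : Finset (Fin ℓ × Fin ℓ)), Mm (τ e.1) (τ e.2)) = 2^ℓ := by
    rw [sum_empty_prod.2]
    simp only [Finset.card_empty, Nat.sub_zero, pow_zero, mul_one]
    exact two_pow_eq
  have htE : ((1:ℝ)/2)^(ℓ - C.edges.card) * (1/4:ℝ)^(C.edges.card) *
      (∑ τ : Fin ℓ → Fin 4, ∏ e ∈ C.edges, Mm (τ e.1) (τ e.2))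
      = (1/4:ℝ)^ℓ * (((gammaCoeff C : ℤ) : ℝ) *
          ∑ σ : Fin ℓ → Fin 4, ∏ e ∈ (cycD ℓ).edges, Mm (σ e.1) (σ e.2)) := by
    rw [hcard, Nat.sub_self, pow_zero, one_mul, gamma_sum hC h4]
  have hrest : ∑ F ∈ (C.edges.powerset.erase ∅).erase C.edges,
      ((1:ℝ)/2)^(ℓ - F.card) * (1/4:ℝ)^F.card *
        (∑ τ : Fin ℓ → Fin 4, ∏ e ∈ F, Mm (τ e.1) (τ e.2)) = 0 := by
    apply Finset.sum_eq_zero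
    intro F hF
    have h1 := Finset.mem_erase.1 hF
    have h2 := Finset.mem_erase.1 h1.2
    have hFsub := Finset.mem_powerset.1 h2.2
    have hFne : F.Nonempty := Finset.nonempty_iff_ne_empty.2 h2.1
    obtain ⟨v, e₀, he₀, hv, hothers⟩ := exists_leaf hC h4 F hFsub hFne h1.1
    rw [kill_leaf Mm Mm_row Mm_col F v e₀ he₀ hv hothers, mul_zero]
  rw [htEmp, htE, hrest, add_zero]

lemma BX_abs_le (F : Finset (Fin ℓ × Fin ℓ)) :
    |∑ τ : Fin ℓ → Fin 4, ∏ e ∈ F, Xm (τ e.1) (τ e.2)| ≤ 4^ℓ := by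
  calc |∑ τ : Fin ℓ → Fin 4, ∏ e ∈ F, Xm (τ e.1) (τ e.2)|
      ≤ ∑ τ : Fin ℓ → Fin 4, |∏ e ∈ F, Xm (τ e.1) (τ e.2)| := Finset.abs_sum_le_sum_abs _ _
    _ ≤ ∑ τ : Fin ℓ → Fin 4, 1 := by
        apply Finset.sum_le_sum
        intro τ _
        rw [Finset.abs_prod]
        apply Finset.prod_le_one
        · intro e _; exact abs_nonneg _
        · intro e _; exact Xm_abs_le _ _
    _ = 4^ℓ := by
        rw [Finset.sum_const, Finset.card_univ, Fintype.card_fun, Fintype.card_fin,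
          Fintype.card_fin]
        simp

lemma pow_half_four (h4 : 4 ≤ ℓ) : ((1:ℝ)/2)^(ℓ-2) * 4^(ℓ-1) = 2^ℓ := by
  have h1 : (4:ℝ)^(ℓ-1) = 2^(2*ℓ-2) := by
    rw [show (4:ℝ) = 2^2 from by norm_num, ← pow_mul]
    congr 1
    omega
  have h2 : (2:ℝ)^(2*ℓ-2) = 2^ℓ * 2^(ℓ-2) := by
    rw [← pow_add]
    congr 1
    omega
  rw [h1, h2]
  rw [show ((1:ℝ)/2)^(ℓ-2) * (2^ℓ * 2^(ℓ-2)) = (((1:ℝ)/2) * 2)^(ℓ-2) * 2^ℓ from by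
    rw [mul_pow]; ring]
  norm_num

lemma T1_est (hC : IsCycleOrientation C) (h4 : 4 ≤ ℓ) (d : ℝ) (hd0 : 0 < d) (hd1 : d ≤ 1) :
    |∑ τ : Fin ℓ → Fin 4, ∏ e ∈ C.edges, ((1:ℝ)/2 + d * Xm (τ e.1) (τ e.2))
      - 2^ℓ - d^2 * 2^ℓ * ((alphaCoeff C (fun _ : Fin 1 => 1) : ℤ) : ℝ)| ≤ d^3 * 8^ℓ := by
  classical
  have hcard := card_edges hC h4
  rw [expand_sum hcard d Xm]
  rw [← Finset.sum_filter_add_sum_filter_not C.edges.powerset (fun F => F.card = 2)]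
  have hmain : ∑ F ∈ C.edges.powerset.filter (fun F => F.card = 2),
      ((1:ℝ)/2)^(ℓ - F.card) * d^F.card *
        (∑ τ : Fin ℓ → Fin 4, ∏ e ∈ F, Xm (τ e.1) (τ e.2))
      = d^2 * 2^ℓ * ((alphaCoeff C (fun _ : Fin 1 => 1) : ℤ) : ℝ) := by
    have hstep : ∀ F ∈ C.edges.powerset.filter (fun F => F.card = 2),
        ((1:ℝ)/2)^(ℓ - F.card) * d^F.card *
          (∑ τ : Fin ℓ → Fin 4, ∏ e ∈ F, Xm (τ e.1) (τ e.2))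
        = ((1:ℝ)/2)^(ℓ - 2) * d^2 *
          (∑ τ : Fin ℓ → Fin 4, ∏ e ∈ F, Xm (τ e.1) (τ e.2)) := by
      intro F hF
      rw [(Finset.mem_filter.1 hF).2]
    rw [Finset.sum_congr rfl hstep, ← Finset.mul_sum, alpha_sum h4]
    rw [show ((1:ℝ)/2)^(ℓ-2) * d^2 * (4^(ℓ-1) * ((alphaCoeff C (fun _ : Fin 1 => 1) : ℤ) : ℝ))
      = (((1:ℝ)/2)^(ℓ-2) * 4^(ℓ-1)) * d^2 * ((alphaCoeff C (fun _ : Fin 1 => 1) : ℤ) : ℝ) from by ring]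
    rw [pow_half_four h4]
    ring
  rw [hmain]
  have hEmpMem : (∅ : Finset (Fin ℓ × Fin ℓ)) ∈
      C.edges.powerset.filter (fun F => ¬ F.card = 2) := by
    apply Finset.mem_filter.2
    exact ⟨Finset.empty_mem_powerset _, by simp⟩
  rw [← Finset.add_sum_erase _ _ hEmpMem]
  have htEmp : ((1:ℝ)/2)^(ℓ - (∅ : Finset (Fin ℓ × Fin ℓ)).card) * d^(∅ : Finset (Fin ℓ × Fin ℓ)).card *
      (∑ τ : Fin ℓ → Fin 4, ∏ e ∈ (∅ : Finset (Fin ℓ × Fin ℓ)), Xm (τ e.1) (τ e.2)) = 2^ℓ := by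
    rw [sum_empty_prod.1]
    simp only [Finset.card_empty, Nat.sub_zero, pow_zero, mul_one]
    exact two_pow_eq
  rw [htEmp]
  rw [show ∀ R : ℝ, (d^2 * 2^ℓ * ((alphaCoeff C (fun _ : Fin 1 => 1) : ℤ) : ℝ) + (2^ℓ + R))
      - 2^ℓ - d^2 * 2^ℓ * ((alphaCoeff C (fun _ : Fin 1 => 1) : ℤ) : ℝ) = R from fun R => by ring]
  -- bound the remainder
  calc |∑ F ∈ (C.edges.powerset.filter (fun F => ¬ F.card = 2)).erase ∅,
        ((1:ℝ)/2)^(ℓ - F.card) * d^F.card *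
          (∑ τ : Fin ℓ → Fin 4, ∏ e ∈ F, Xm (τ e.1) (τ e.2))|
      ≤ ∑ F ∈ (C.edges.powerset.filter (fun F => ¬ F.card = 2)).erase ∅,
        |((1:ℝ)/2)^(ℓ - F.card) * d^F.card *
          (∑ τ : Fin ℓ → Fin 4, ∏ e ∈ F, Xm (τ e.1) (τ e.2))| := Finset.abs_sum_le_sum_abs _ _
    _ ≤ ∑ F ∈ (C.edges.powerset.filter (fun F => ¬ F.card = 2)).erase ∅, d^3 * 4^ℓ := by
        apply Finset.sum_le_sum
        intro F hF
        have h1 := Finset.mem_erase.1 hF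
        have h2 := Finset.mem_filter.1 h1.2
        have hFsub := Finset.mem_powerset.1 h2.1
        have hFne : F.card ≠ 0 := by
          intro hcon
          exact h1.1 (Finset.card_eq_zero.1 hcon)
        by_cases hc1 : F.card = 1
        · -- singleton : the sum is zero
          obtain ⟨e, rfl⟩ := Finset.card_eq_one.1 hc1
          have he : e ∈ C.edges := hFsub (Finset.mem_singleton_self e)
          have hzero : ∑ τ : Fin ℓ → Fin 4, ∏ e' ∈ ({e} : Finset (Fin ℓ × Fin ℓ)),
              Xm (τ e'.1) (τ e'.2) = 0 := by
            apply kill_two Xm Xm_total _ e (Finset.mem_singleton_self e) (C.irrefl e he)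
            intro e' he' hne'
            exact absurd (Finset.mem_singleton.1 he') hne'
          rw [hzero, mul_zero, abs_zero]
          positivity
        · -- card ≥ 3
          have hc3 : 3 ≤ F.card := by omega
          rw [abs_mul, abs_mul]
          have b1 : |((1:ℝ)/2)^(ℓ - F.card)| ≤ 1 := by
            rw [abs_pow]
            apply pow_le_one₀ (abs_nonneg _)
            rw [abs_of_pos (by norm_num : (0:ℝ) < 1/2)]
            norm_num
          have b2 : |d^F.card| ≤ d^3 := by
            rw [abs_pow, abs_of_pos hd0]
            exact pow_le_pow_of_le_one (le_of_lt hd0) hd1 hc3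
          have b3 := BX_abs_le F
          calc |((1:ℝ)/2)^(ℓ - F.card)| * |d^F.card| *
                |∑ τ : Fin ℓ → Fin 4, ∏ e ∈ F, Xm (τ e.1) (τ e.2)|
              ≤ 1 * d^3 * 4^ℓ := by
                apply mul_le_mul (mul_le_mul b1 b2 (abs_nonneg _) (by norm_num)) b3
                  (abs_nonneg _)
                positivity
            _ = d^3 * 4^ℓ := by ring
    _ ≤ (2:ℝ)^ℓ * (d^3 * 4^ℓ) := by
        rw [Finset.sum_const, nsmul_eq_mul]
        apply mul_le_mul_of_nonneg_right _ (by positivity)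
        calc (((C.edges.powerset.filter (fun F => ¬ F.card = 2)).erase ∅).card : ℝ)
            ≤ (C.edges.powerset.card : ℝ) := by
              apply Nat.cast_le.2
              apply Finset.card_le_card
              intro F hF
              exact Finset.mem_filter.1 (Finset.mem_erase.1 hF).2 |>.1
          _ = (2:ℝ)^ℓ := by
              rw [Finset.card_powerset, hcard]
              push_cast
              rfl
    _ = d^3 * 8^ℓ := by
        rw [show (8:ℝ) = 2*4 from by norm_num, mul_pow]
        ring

end ExpandSec

end QRaux


/-- if `α_C(2)` and `γ_C` are non-zero of different signs, then `C` is not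
quasirandom-forcing. -/
theorem not_quasirandomForcing_of_alpha2 (ℓ : ℕ) (hℓ : 4 ≤ ℓ) (hEv : Even ℓ)
    (C : OrientedGraph (Fin ℓ)) (hC : IsCycleOrientation C)
    (h : alphaCoeff C (fun _ : Fin 1 => 1) * gammaCoeff C < 0) :
    ¬ QuasirandomForcing C := by
  open QRaux in
  intro hQF
  haveI : NeZero ℓ := ⟨by omega⟩
  -- abbreviations
  have hZDpos : 0 < ∑ σ : Fin ℓ → Fin 4, ∏ e ∈ (cycD ℓ).edges, Mm (σ e.1) (σ e.2) :=
    ZD_pos hℓ hEv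
  set ZD := ∑ σ : Fin ℓ → Fin 4, ∏ e ∈ (cycD ℓ).edges, Mm (σ e.1) (σ e.2) with hZDdef
  set d : ℝ := 1 / (2 * 4^ℓ) with hddef
  have h4ℓpos : (0:ℝ) < 4^ℓ := by positivity
  have h4ℓ1 : (1:ℝ) ≤ 4^ℓ := one_le_pow₀ (by norm_num)
  have hd0 : 0 < d := by rw [hddef]; positivity
  have hd1 : d ≤ 1 := by
    rw [hddef, div_le_one (by positivity)]
    linarith
  have h4ℓ4 : (4:ℝ) ≤ 4^ℓ := by
    calc (4:ℝ) = 4^1 := (pow_one 4).symm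
      _ ≤ 4^ℓ := pow_le_pow_right₀ (by norm_num) (by omega)
  have hdq : d ≤ 1/4 := by
    rw [hddef, div_le_div_iff₀ (by positivity) (by norm_num)]
    linarith
  have hd8 : d * 8^ℓ = 2^ℓ / 2 := by
    rw [hddef, show (8:ℝ) = 2 * 4 from by norm_num, mul_pow]
    field_simp
  -- the kernel family
  set N : ℝ → Fin 4 → Fin 4 → ℝ :=
    fun s i j => (1-s) * (1/4) * Mm i j + s * d * Xm i j with hNdef
  set T : ℝ → ℝ :=
    fun s => ∑ τ : Fin ℓ → Fin 4, ∏ e ∈ C.edges, ((1:ℝ)/2 + N s (τ e.1) (τ e.2)) with hTdef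
  have hTcont : Continuous T := by
    rw [hTdef]
    apply continuous_finset_sum
    intro τ _
    apply continuous_finset_prod
    intro e _
    apply Continuous.add continuous_const
    rw [hNdef]
    exact (((continuous_const.sub continuous_id).mul continuous_const).mul
      continuous_const).add ((continuous_id.mul continuous_const).mul continuous_const)
  -- endpoint values
  have hT0 : T 0 = 2^ℓ + (1/4:ℝ)^ℓ * (((gammaCoeff C : ℤ) : ℝ) * ZD) := by
    rw [hTdef]
    show (∑ τ : Fin ℓ → Fin 4, ∏ e ∈ C.edges, ((1:ℝ)/2 + N 0 (τ e.1) (τ e.2))) = _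
    have : ∀ τ : Fin ℓ → Fin 4, ∀ e ∈ C.edges,
        ((1:ℝ)/2 + N 0 (τ e.1) (τ e.2)) = ((1:ℝ)/2 + (1/4) * Mm (τ e.1) (τ e.2)) := by
      intro τ e _
      rw [hNdef]
      ring
    rw [Finset.sum_congr rfl (fun τ _ => Finset.prod_congr rfl (this τ))]
    rw [T0_val hC hℓ]
  have hT1 : |T 1 - 2^ℓ - d^2 * 2^ℓ * ((alphaCoeff C (fun _ : Fin 1 => 1) : ℤ) : ℝ)|
      ≤ d^3 * 8^ℓ := by
    rw [hTdef]
    show |(∑ τ : Fin ℓ → Fin 4, ∏ e ∈ C.edges, ((1:ℝ)/2 + N 1 (τ e.1) (τ e.2)))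
      - 2^ℓ - d^2 * 2^ℓ * ((alphaCoeff C (fun _ : Fin 1 => 1) : ℤ) : ℝ)| ≤ d^3 * 8^ℓ
    have : ∀ τ : Fin ℓ → Fin 4, ∀ e ∈ C.edges,
        ((1:ℝ)/2 + N 1 (τ e.1) (τ e.2)) = ((1:ℝ)/2 + d * Xm (τ e.1) (τ e.2)) := by
      intro τ e _
      rw [hNdef]
      ring
    rw [Finset.sum_congr rfl (fun τ _ => Finset.prod_congr rfl (this τ))]
    exact T1_est hC hℓ d hd0 hd1
  -- sign analysis
  have hγcases : gammaCoeff C = 1 ∨ gammaCoeff C = -1 := by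
    rw [gammaCoeff]
    by_cases hobt : ObtainedBy (cycD ℓ) C.edges Even
    · left; rw [if_pos hobt]
    · right; rw [if_neg hobt]
  have herr : d^3 * 8^ℓ = d^2 * (2^ℓ/2) := by
    rw [← hd8]; ring
  have h2ℓpos : (0:ℝ) < 2^ℓ := by positivity
  have hd2pos : (0:ℝ) < d^2 := by positivity
  have hquarterpos : (0:ℝ) < (1/4:ℝ)^ℓ := by positivity
  have habs := abs_le.1 hT1
  -- find a root of T s = 2^ℓ with s ∈ [0,1]
  have hs : ∃ s ∈ Set.Icc (0:ℝ) 1, T s = 2^ℓ := by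
    rcases hγcases with hγ | hγ
    · -- γ = 1 : α < 0
      have hαneg : alphaCoeff C (fun _ : Fin 1 => 1) < 0 := by
        rw [hγ, mul_one] at h
        exact h
      have hα1 : ((alphaCoeff C (fun _ : Fin 1 => 1) : ℤ) : ℝ) ≤ -1 := by
        have : alphaCoeff C (fun _ : Fin 1 => 1) ≤ -1 := by omega
        exact_mod_cast this
      have hT1lt : T 1 < 2^ℓ := by
        have h1 : T 1 - 2^ℓ ≤ d^2 * 2^ℓ *
            ((alphaCoeff C (fun _ : Fin 1 => 1) : ℤ) : ℝ) + d^3 * 8^ℓ := by linarith [habs.2]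
        have h2 : d^2 * 2^ℓ * ((alphaCoeff C (fun _ : Fin 1 => 1) : ℤ) : ℝ)
            ≤ d^2 * 2^ℓ * (-1) := by
          apply mul_le_mul_of_nonneg_left hα1 (by positivity)
        rw [herr] at h1
        have hp : 0 < d^2 * 2^ℓ := mul_pos hd2pos h2ℓpos
        have he2 : d^2 * (2^ℓ/2) = (d^2 * 2^ℓ)/2 := by ring
        have he3 : d^2 * 2^ℓ * (-1:ℝ) = -(d^2 * 2^ℓ) := by ring
        linarith
      have hT0gt : 2^ℓ < T 0 := by
        rw [hT0, hγ]
        have : (0:ℝ) < (1/4:ℝ)^ℓ * (((1:ℤ) : ℝ) * ZD) := by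
          rw [show (((1:ℤ):ℝ) * ZD) = ZD from by push_cast; ring]
          exact mul_pos hquarterpos hZDpos
        linarith
      have hIvt := intermediate_value_Icc' (by norm_num : (0:ℝ) ≤ 1) hTcont.continuousOn
      have hmem : (2:ℝ)^ℓ ∈ Set.Icc (T 1) (T 0) := ⟨le_of_lt hT1lt, le_of_lt hT0gt⟩
      obtain ⟨s, hs01, hTs⟩ := hIvt hmem
      exact ⟨s, hs01, hTs⟩
    · -- γ = -1 : α > 0
      have hαpos : 0 < alphaCoeff C (fun _ : Fin 1 => 1) := by
        rw [hγ] at h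
        omega
      have hα1 : (1:ℝ) ≤ ((alphaCoeff C (fun _ : Fin 1 => 1) : ℤ) : ℝ) := by
        have : 1 ≤ alphaCoeff C (fun _ : Fin 1 => 1) := by omega
        exact_mod_cast this
      have hT1gt : 2^ℓ < T 1 := by
        have h1 : d^2 * 2^ℓ * ((alphaCoeff C (fun _ : Fin 1 => 1) : ℤ) : ℝ)
            - d^3 * 8^ℓ ≤ T 1 - 2^ℓ := by linarith [habs.1]
        have h2 : d^2 * 2^ℓ * (1:ℝ)
            ≤ d^2 * 2^ℓ * ((alphaCoeff C (fun _ : Fin 1 => 1) : ℤ) : ℝ) := by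
          apply mul_le_mul_of_nonneg_left hα1 (by positivity)
        rw [herr] at h1
        have hp : 0 < d^2 * 2^ℓ := mul_pos hd2pos h2ℓpos
        have he2 : d^2 * (2^ℓ/2) = (d^2 * 2^ℓ)/2 := by ring
        have he3 : d^2 * 2^ℓ * (1:ℝ) = d^2 * 2^ℓ := by ring
        linarith
      have hT0lt : T 0 < 2^ℓ := by
        rw [hT0, hγ]
        have : (0:ℝ) < (1/4:ℝ)^ℓ * ZD := mul_pos hquarterpos hZDpos
        have heq : (1/4:ℝ)^ℓ * ((((-1):ℤ) : ℝ) * ZD) = -((1/4:ℝ)^ℓ * ZD) := by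
          push_cast; ring
        rw [heq]
        linarith
      have hIvt := intermediate_value_Icc (by norm_num : (0:ℝ) ≤ 1) hTcont.continuousOn
      have hmem : (2:ℝ)^ℓ ∈ Set.Icc (T 0) (T 1) := ⟨le_of_lt hT0lt, le_of_lt hT1gt⟩
      obtain ⟨s, hs01, hTs⟩ := hIvt hmem
      exact ⟨s, hs01, hTs⟩
  obtain ⟨s, hs01, hTs⟩ := hs
  -- the counterexample tournamenton
  have hanti : ∀ i j, N s j i = - N s i j := by
    intro i j
    rw [hNdef]
    dsimp only
    rw [Mm_antisymm i j, Xm_antisymm i j]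
    ring
  have hbd : ∀ i j, |N s i j| ≤ 1/2 := by
    intro i j
    rw [hNdef]
    dsimp only
    have hs1 : (0:ℝ) ≤ 1 - s := by linarith [hs01.2]
    have h14 : (0:ℝ) ≤ (1-s) * (1/4) := by
      apply mul_nonneg hs1
      norm_num
    have h1 : |(1-s) * (1/4) * Mm i j| ≤ (1-s) * (1/4) := by
      rw [abs_mul, abs_of_nonneg h14]
      exact mul_le_of_le_one_right h14 (Mm_abs_le i j)
    have hsd : (0:ℝ) ≤ s * d := mul_nonneg hs01.1 hd0.le
    have h2 : |s * d * Xm i j| ≤ s * (1/4) := by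
      rw [abs_mul, abs_of_nonneg hsd]
      calc s * d * |Xm i j| ≤ s * d * 1 := by
            apply mul_le_mul_of_nonneg_left (Xm_abs_le i j) hsd
        _ = s * d := mul_one _
        _ ≤ s * (1/4) := mul_le_mul_of_nonneg_left hdq hs01.1
    calc |(1-s) * (1/4) * Mm i j + s * d * Xm i j|
        ≤ |(1-s) * (1/4) * Mm i j| + |s * d * Xm i j| := abs_add_le _ _
      _ ≤ (1-s) * (1/4) + s * (1/4) := add_le_add h1 h2
      _ ≤ 1/2 := by linarith
  have htour : IsTournamenton (fun x y => 1/2 + N s (kap x) (kap y)) :=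
    step_tournamenton (N s) hanti hbd
  have hdens : homDensity C (fun x y => 1/2 + N s (kap x) (kap y))
      = (1/2:ℝ)^C.edges.card := by
    have hstep := homDensity_step ℓ C (N s)
    rw [hstep]
    have : (∑ τ : Fin ℓ → Fin 4, ∏ e ∈ C.edges, ((1:ℝ)/2 + N s (τ e.1) (τ e.2))) = T s := by
      rw [hTdef]
    rw [this, hTs, card_edges hC hℓ]
    rw [← mul_pow]
    norm_num
  have hae := hQF _ htour hdens
  -- extract a nonzero entry of `N s`
  have hentry : ∃ i j, N s i j ≠ 0 := by
    rcases eq_or_lt_of_le hs01.1 with hs0 | hs0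
    · refine ⟨0, 1, ?_⟩
      rw [hNdef, ← hs0]
      dsimp only
      rw [Mm_01]
      norm_num [Xm]
    · refine ⟨0, 2, ?_⟩
      rw [hNdef]
      dsimp only
      have hm02 : Mm 0 2 = 0 := by norm_num [Mm]
      rw [hm02, Xm_02]
      have hpos : 0 < s * d := mul_pos hs0 hd0
      intro hc
      rw [mul_zero, zero_add, mul_one] at hc
      exact (ne_of_gt hpos) hc
  obtain ⟨i, j, hij⟩ := hentry
  have hBmble : MeasurableSet ((Jset i) ×ˢ (Jset j)) := (J_mble i).prod (J_mble j)
  have hsub2 : (Jset i) ×ˢ (Jset j) ⊆ (Set.Icc (0:ℝ) 1) ×ˢ (Set.Icc (0:ℝ) 1) :=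
    Set.prod_mono (J_subset i) (J_subset j)
  have hneq : ∀ p ∈ (Jset i) ×ˢ (Jset j),
      ¬ ((fun x y => 1/2 + N s (kap x) (kap y)) p.1 p.2 = 1/2) := by
    intro p hp
    have h1 : kap p.1 = i := kap_eq_of_mem hp.1
    have h2 : kap p.2 = j := kap_eq_of_mem hp.2
    show ¬ ((1:ℝ)/2 + N s (kap p.1) (kap p.2) = 1/2)
    rw [h1, h2]
    intro hc
    exact hij (by linear_combination hc)
  rw [MeasureTheory.ae_iff] at hae
  have hle : squareMeasure ((Jset i) ×ˢ (Jset j))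
      ≤ squareMeasure {p : ℝ × ℝ | ¬ ((fun x y => 1/2 + N s (kap x) (kap y)) p.1 p.2 = 1/2)} :=
    MeasureTheory.measure_mono (fun p hp => hneq p hp)
  rw [hae] at hle
  have hB0 : squareMeasure ((Jset i) ×ˢ (Jset j)) = 0 := le_antisymm hle zero_le
  have hBval : squareMeasure ((Jset i) ×ˢ (Jset j))
      = ENNReal.ofReal (1/4) * ENNReal.ofReal (1/4) := by
    rw [squareMeasure, MeasureTheory.Measure.restrict_apply hBmble,
      Set.inter_eq_self_of_subset_left hsub2]
    rw [MeasureTheory.Measure.volume_eq_prod, MeasureTheory.Measure.prod_prod, vol_J, vol_J]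
  rw [hBval] at hB0
  have hofr : ENNReal.ofReal (1/4) ≠ 0 := by
    rw [← ENNReal.ofReal_zero]
    intro hc
    have := ENNReal.ofReal_eq_ofReal_iff (by norm_num : (0:ℝ) ≤ 1/4) (le_refl 0) |>.1 hc
    norm_num at this
  exact (mul_ne_zero hofr hofr) hB0
end QRauxC
end QRauxB
end QRaux
end
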